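/- arXiv:0912.0185 — 6 statements merged into one kernel-verified Lean document; each statement's English description precedes it below -/
import Mathlib

section
/- For every real number z, exp(-z²/2) ≤ 2√π · N(z) · √(-log N(z)), where N(z) = (1/√(2π)) ∫_{-∞}^{z} exp(-ρ²/2) dρ is the standard normal cumulative distribution function. (Note: for z where N(z) is close to 1, -log N(z) is small but positive since N(z) < 1.) -/
open MeasureTheory

/-- The standard normal cumulative distribution function. -/
noncomputable def stdNormalCDF (z : ℝ) : ℝ :=
  (Real.sqrt (2 * Real.pi))⁻¹ * ∫ ρ in Set.Iic z, Real.exp (-ρ ^ 2 / 2)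

section Aux

open Real Filter Set Topology

noncomputable def gs (ρ : ℝ) : ℝ := Real.exp (-ρ ^ 2 / 2)

lemma gs_eq : gs = fun ρ : ℝ => Real.exp (-(1/2 : ℝ) * ρ ^ 2) := by
  funext ρ; simp only [gs]; ring_nf

lemma integrable_gs : Integrable gs := by
  rw [gs_eq]; exact integrable_exp_neg_mul_sq (by norm_num)

lemma integral_gs : ∫ ρ, gs ρ = Real.sqrt (2 * π) := by
  rw [gs_eq]
  have h := integral_gaussian (1/2 : ℝ)
  rw [show (π / (1/2 : ℝ)) = 2 * π by ring] at h
  simpa using h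

lemma gs_pos (ρ : ℝ) : 0 < gs ρ := Real.exp_pos _

lemma gs_nonneg (ρ : ℝ) : 0 ≤ gs ρ := (gs_pos ρ).le

lemma integral_gs_Iic_zero : ∫ ρ in Iic (0:ℝ), gs ρ = Real.sqrt (2 * π) / 2 := by
  have heven : ∫ ρ in Iic (0:ℝ), gs ρ = ∫ ρ in Ioi (0:ℝ), gs ρ := by
    have h := integral_comp_neg_Iic (0:ℝ) gs
    rw [neg_zero] at h
    rw [← h]
    congr 1; funext ρ; simp [gs]
  have hsplit := intervalIntegral.integral_Iic_add_Ioi (b := (0:ℝ))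
    integrable_gs.integrableOn integrable_gs.integrableOn
  rw [integral_gs] at hsplit
  linarith [heven, hsplit]

lemma sqrt2pi_sq : (Real.sqrt (2*π))^2 = 2*π := Real.sq_sqrt (by positivity)

lemma sqrt2pi_pos : 0 < Real.sqrt (2*π) := Real.sqrt_pos.mpr (by positivity)

lemma exp_neg_sum6 (t : ℝ) (h0 : 0 ≤ t) (h1 : t ≤ 1) :
    |Real.exp (-t) - (1 - t + t^2/2 - t^3/6 + t^4/24 - t^5/120)| ≤ 7*t^6/4320 := by
  have h := Real.exp_bound (x := -t) (by rwa [abs_neg, abs_of_nonneg h0]) (n := 6) (by norm_num)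
  rw [abs_neg, abs_of_nonneg h0] at h
  have hs : ∑ m ∈ Finset.range 6, (-t) ^ m / (Nat.factorial m) =
      1 - t + t^2/2 - t^3/6 + t^4/24 - t^5/120 := by
    simp [Finset.sum_range_succ, Nat.factorial]
    ring
  rw [hs] at h
  calc |Real.exp (-t) - _| ≤ t^6 * ((6:ℕ).succ / ((Nat.factorial 6) * 6)) := h
  _ = 7*t^6/4320 := by norm_num [Nat.factorial]; ring

lemma exp_neg_ub (t : ℝ) (h0 : 0 ≤ t) (h1 : t ≤ 1) :
    Real.exp (-t) ≤ 1 - t + t^2/2 - t^3/6 + t^4/24 - t^5/120 + 7*t^6/4320 := by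
  have := abs_le.mp (exp_neg_sum6 t h0 h1)
  linarith [this.2]

lemma exp_neg_lb (t : ℝ) (h0 : 0 ≤ t) (h1 : t ≤ 1) :
    1 - t + t^2/2 - t^3/6 + t^4/24 - t^5/120 - 7*t^6/4320 ≤ Real.exp (-t) := by
  have := abs_le.mp (exp_neg_sum6 t h0 h1)
  linarith [this.1]

noncomputable def Phi (ρ : ℝ) : ℝ := 1 - ρ^2/2 + ρ^4/8 - ρ^6/48 + ρ^8/384 - ρ^10/3840 + 7*ρ^12/276480

noncomputable def Plo (ρ : ℝ) : ℝ := 1 - ρ^2/2 + ρ^4/8 - ρ^6/48 + ρ^8/384 - ρ^10/3840 - 7*ρ^12/276480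

noncomputable def Qhi (x : ℝ) : ℝ := x - x^3/6 + x^5/40 - x^7/336 + x^9/3456 - x^11/42240 + 7*x^13/3594240

noncomputable def Qlo (x : ℝ) : ℝ := x - x^3/6 + x^5/40 - x^7/336 + x^9/3456 - x^11/42240 - 7*x^13/3594240

lemma gs_le_Phi (ρ : ℝ) (h : ρ^2 ≤ 2) : gs ρ ≤ Phi ρ := by
  have h0 : (0:ℝ) ≤ ρ^2/2 := by positivity
  have := exp_neg_ub (ρ^2/2) h0 (by linarith)
  have he : gs ρ = Real.exp (-(ρ^2/2)) := by simp [gs]; ring_nf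
  rw [he]
  calc Real.exp (-(ρ^2/2)) ≤ _ := this
  _ = Phi ρ := by simp only [Phi]; ring

lemma Plo_le_gs (ρ : ℝ) (h : ρ^2 ≤ 2) : Plo ρ ≤ gs ρ := by
  have h0 : (0:ℝ) ≤ ρ^2/2 := by positivity
  have := exp_neg_lb (ρ^2/2) h0 (by linarith)
  have he : gs ρ = Real.exp (-(ρ^2/2)) := by simp [gs]; ring_nf
  rw [he]
  calc Plo ρ = _ := by simp only [Plo]; ring
  _ ≤ Real.exp (-(ρ^2/2)) := this

lemma hasDerivAt_Qhi (u : ℝ) : HasDerivAt Qhi (Phi u) u := by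
  have h1 := (hasDerivAt_id u).sub ((hasDerivAt_pow 3 u).div_const 6)
  have h2 := h1.add ((hasDerivAt_pow 5 u).div_const 40)
  have h3 := h2.sub ((hasDerivAt_pow 7 u).div_const 336)
  have h4 := h3.add ((hasDerivAt_pow 9 u).div_const 3456)
  have h5 := h4.sub ((hasDerivAt_pow 11 u).div_const 42240)
  have h6 := h5.add (((hasDerivAt_pow 13 u).const_mul 7).div_const 3594240)
  refine h6.congr_deriv ?_
  simp only [Phi]; push_cast; ring

lemma hasDerivAt_Qlo (u : ℝ) : HasDerivAt Qlo (Plo u) u := by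
  have h1 := (hasDerivAt_id u).sub ((hasDerivAt_pow 3 u).div_const 6)
  have h2 := h1.add ((hasDerivAt_pow 5 u).div_const 40)
  have h3 := h2.sub ((hasDerivAt_pow 7 u).div_const 336)
  have h4 := h3.add ((hasDerivAt_pow 9 u).div_const 3456)
  have h5 := h4.sub ((hasDerivAt_pow 11 u).div_const 42240)
  have h6 := h5.sub (((hasDerivAt_pow 13 u).const_mul 7).div_const 3594240)
  refine h6.congr_deriv ?_
  simp only [Plo]; push_cast; ring

lemma continuous_Phi : Continuous Phi := by unfold Phi; fun_prop

lemma continuous_Plo : Continuous Plo := by unfold Plo; fun_prop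

lemma J_le (x : ℝ) (h0 : 0 ≤ x) (h1 : x ≤ 5/4) : ∫ ρ in (0:ℝ)..x, gs ρ ≤ Qhi x := by
  have hint : ∫ ρ in (0:ℝ)..x, Phi ρ = Qhi x := by
    have := intervalIntegral.integral_eq_sub_of_hasDerivAt
      (f := Qhi) (f' := Phi) (a := (0:ℝ)) (b := x)
      (fun u _ => hasDerivAt_Qhi u) (continuous_Phi.intervalIntegrable 0 x)
    rw [this]; simp [Qhi]
  rw [← hint]
  apply intervalIntegral.integral_mono_on h0 (integrable_gs.intervalIntegrable)
    (continuous_Phi.intervalIntegrable 0 x)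
  intro ρ hρ
  exact gs_le_Phi ρ (by nlinarith [hρ.1, hρ.2])

lemma J_ge (x : ℝ) (h0 : 0 ≤ x) (h1 : x ≤ 5/4) : Qlo x ≤ ∫ ρ in (0:ℝ)..x, gs ρ := by
  have hint : ∫ ρ in (0:ℝ)..x, Plo ρ = Qlo x := by
    have := intervalIntegral.integral_eq_sub_of_hasDerivAt
      (f := Qlo) (f' := Plo) (a := (0:ℝ)) (b := x)
      (fun u _ => hasDerivAt_Qlo u) (continuous_Plo.intervalIntegrable 0 x)
    rw [this]; simp [Qlo]
  rw [← hint]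
  apply intervalIntegral.integral_mono_on h0 (continuous_Plo.intervalIntegrable 0 x)
    (integrable_gs.intervalIntegrable)
  intro ρ hρ
  exact Plo_le_gs ρ (by nlinarith [hρ.1, hρ.2])

lemma N_eq (z : ℝ) : stdNormalCDF z = (Real.sqrt (2*π))⁻¹ * ∫ ρ in Iic z, gs ρ := rfl

lemma inv_sqrt2pi_lb : (3989/10000 : ℝ) ≤ (Real.sqrt (2*π))⁻¹ := by
  have h2 : Real.sqrt (2*π) ≤ 10000/3989 := by
    rw [show (10000/3989 : ℝ) = Real.sqrt ((10000/3989)^2) by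
      rw [Real.sqrt_sq (by norm_num)]]
    apply Real.sqrt_le_sqrt
    nlinarith [Real.pi_lt_d6]
  calc (3989/10000:ℝ) = ((10000:ℝ)/3989)⁻¹ := by norm_num
  _ ≤ (Real.sqrt (2*π))⁻¹ := inv_anti₀ sqrt2pi_pos h2

lemma inv_sqrt2pi_ub : (Real.sqrt (2*π))⁻¹ ≤ (39895/100000 : ℝ) := by
  have h2 : (100000/39895 : ℝ) ≤ Real.sqrt (2*π) := by
    rw [show (100000/39895 : ℝ) = Real.sqrt ((100000/39895)^2) by
      rw [Real.sqrt_sq (by norm_num)]]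
    apply Real.sqrt_le_sqrt
    nlinarith [Real.pi_gt_d6]
  calc (Real.sqrt (2*π))⁻¹ ≤ (100000/39895 : ℝ)⁻¹ := by
        apply inv_anti₀ (by norm_num) h2
  _ = 39895/100000 := by norm_num

lemma integral_Iic_gs_pos (z : ℝ) : 0 < ∫ ρ in Iic z, gs ρ := by
  rw [setIntegral_pos_iff_support_of_nonneg_ae
    (Filter.Eventually.of_forall gs_nonneg) integrable_gs.integrableOn]
  have : Function.support gs = univ := by
    ext ρ; simp [Function.support, (gs_pos ρ).ne']
  rw [this, univ_inter]
  simp [Real.volume_Iic]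

lemma N_pos (z : ℝ) : 0 < stdNormalCDF z := by
  rw [N_eq]
  exact mul_pos (inv_pos.mpr sqrt2pi_pos) (integral_Iic_gs_pos z)

lemma N_mono {a b : ℝ} (h : a ≤ b) : stdNormalCDF a ≤ stdNormalCDF b := by
  rw [N_eq, N_eq]
  apply mul_le_mul_of_nonneg_left _ (inv_pos.mpr sqrt2pi_pos).le
  apply setIntegral_mono_set integrable_gs.integrableOn
    (Filter.Eventually.of_forall gs_nonneg)
  exact HasSubset.Subset.eventuallyLE (Iic_subset_Iic.mpr h)

lemma N_formula {a : ℝ} (ha : a ≤ 0) :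
    stdNormalCDF a = (Real.sqrt (2*π))⁻¹ * (Real.sqrt (2*π)/2 - ∫ ρ in (0:ℝ)..(-a), gs ρ) := by
  rw [N_eq]
  congr 1
  have hsub := intervalIntegral.integral_Iic_sub_Iic (f := gs) (a := a) (b := (0:ℝ)) (μ := volume)
    integrable_gs.integrableOn integrable_gs.integrableOn
  rw [integral_gs_Iic_zero] at hsub
  have heven : ∫ ρ in a..(0:ℝ), gs ρ = ∫ ρ in (0:ℝ)..(-a), gs ρ := by
    have h := intervalIntegral.integral_comp_neg (a := (0:ℝ)) (b := -a) gs
    rw [neg_neg, neg_zero] at h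
    rw [← h]
    congr 1; funext ρ; simp [gs]
  linarith [hsub, heven]

lemma N_lb {a n : ℝ} (ha : -5/4 ≤ a) (ha0 : a ≤ 0)
    (h : n + (39895/100000) * Qhi (-a) ≤ 1/2) : n ≤ stdNormalCDF a := by
  rw [N_formula ha0]
  have hJ := J_le (-a) (by linarith) (by linarith)
  have hJ0 : 0 ≤ ∫ ρ in (0:ℝ)..(-a), gs ρ :=
    intervalIntegral.integral_nonneg (by linarith) (fun u _ => gs_nonneg u)
  have hub := inv_sqrt2pi_ub
  have hlb := inv_sqrt2pi_lb
  have hspos := sqrt2pi_pos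
  have hsinv : (Real.sqrt (2*π))⁻¹ * Real.sqrt (2*π) = 1 :=
    inv_mul_cancel₀ hspos.ne'
  nlinarith [mul_le_mul hub hJ hJ0 (by norm_num : (0:ℝ) ≤ 39895/100000)]

lemma N_ub {a q : ℝ} (ha : -5/4 ≤ a) (ha0 : a ≤ 0)
    (h : 1/2 ≤ q + (3989/10000) * Qlo (-a)) (hq : 0 ≤ Qlo (-a)) :
    stdNormalCDF a ≤ q := by
  rw [N_formula ha0]
  have hJ := J_ge (-a) (by linarith) (by linarith)
  have hub := inv_sqrt2pi_ub
  have hlb := inv_sqrt2pi_lb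
  have hspos := sqrt2pi_pos
  have hsinv : (Real.sqrt (2*π))⁻¹ * Real.sqrt (2*π) = 1 :=
    inv_mul_cancel₀ hspos.ne'
  nlinarith [mul_le_mul hlb hJ hq (by positivity)]

noncomputable def Ub (t : ℝ) : ℝ := 1 - t + t^2/2 - t^3/6 + t^4/24 - t^5/120 + 7*t^6/4320

noncomputable def Lb (t : ℝ) : ℝ := 1 - t + t^2/2 - t^3/6 + t^4/24 - t^5/120 - 7*t^6/4320

lemma exp_neg_point_ub {t E : ℝ} (h0 : 0 ≤ t) (h1 : t ≤ 2) (hE : (Ub (t/2))^2 ≤ E) :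
    Real.exp (-t) ≤ E := by
  have h2 : Real.exp (-t) = (Real.exp (-(t/2)))^2 := by
    rw [← Real.exp_nat_mul]; congr 1; push_cast; ring
  rw [h2]
  refine le_trans (pow_le_pow_left₀ (Real.exp_pos _).le
    (exp_neg_ub (t/2) (by linarith) (by linarith)) 2) hE

lemma exp_neg_point_lb {t q : ℝ} (h0 : 0 ≤ t) (h1 : t ≤ 3)
    (hL : 0 ≤ Lb (t/3)) (hq : q ≤ (Lb (t/3))^3) : q ≤ Real.exp (-t) := by
  have h2 : Real.exp (-t) = (Real.exp (-(t/3)))^3 := by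
    rw [← Real.exp_nat_mul]; congr 1; push_cast; ring
  rw [h2]
  refine le_trans hq (pow_le_pow_left₀ hL
    (exp_neg_lb (t/3) (by linarith) (by linarith)) 3)

lemma numeric_step {z a b n q c E : ℝ} (haz : a ≤ z) (hzb : z ≤ b) (hb0 : b ≤ 0)
    (hn : n ≤ stdNormalCDF a) (hq : stdNormalCDF b ≤ q)
    (hn0 : 0 < n) (hc : 0 < c) (hqc : q ≤ Real.exp (-c))
    (hE : Real.exp (-b^2) ≤ E) (hcond : E ≤ 4*(3141592/10^6)*n^2*c) :
    Real.exp (-z^2) ≤ 4*π*(stdNormalCDF z)^2*(-Real.log (stdNormalCDF z)) := by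
  have hNpos : 0 < stdNormalCDF z := N_pos z
  have hNn : n ≤ stdNormalCDF z := le_trans hn (N_mono haz)
  have hNq : stdNormalCDF z ≤ q := le_trans (N_mono hzb) hq
  have hlog : c ≤ -Real.log (stdNormalCDF z) := by
    have h1 : Real.log (stdNormalCDF z) ≤ -c := by
      rw [Real.log_le_iff_le_exp hNpos]; exact le_trans hNq hqc
    linarith
  have h1 : Real.exp (-z^2) ≤ E := by
    refine le_trans (Real.exp_le_exp.mpr ?_) hE
    nlinarith
  have hsq : n^2 ≤ (stdNormalCDF z)^2 := by nlinarith
  have hA : n^2*c ≤ (stdNormalCDF z)^2 * (-Real.log (stdNormalCDF z)) :=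
    mul_le_mul hsq hlog hc.le (sq_nonneg _)
  have hπ : (3141592/10^6:ℝ) ≤ π := by linarith [Real.pi_gt_d6]
  calc Real.exp (-z^2) ≤ E := h1
  _ ≤ 4*(3141592/10^6)*n^2*c := hcond
  _ ≤ 4*π*n^2*c := by nlinarith [sq_nonneg n, hc, mul_pos (mul_pos hn0 hn0) hc]
  _ ≤ 4*π*(stdNormalCDF z)^2*(-Real.log (stdNormalCDF z)) := by
      nlinarith [hA, Real.pi_pos]

lemma N_zero : stdNormalCDF 0 ≤ 1/2 := by
  have := N_ub (a := (0:ℝ)) (q := 1/2) (by norm_num) le_rfl (by norm_num [Qlo]) (by norm_num [Qlo])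
  simpa using this

lemma numeric_region {z : ℝ} (h1 : -5/4 ≤ z) (h2 : z ≤ 0) :
    Real.exp (-z^2) ≤ 4*π*(stdNormalCDF z)^2*(-Real.log (stdNormalCDF z)) := by
  rcases le_or_gt z (-23/20) with g0 | g0
  · exact numeric_step (n := 10563/100000) (q := 12513/100000) (c := 519/250) (E := 533/2000) h1 g0 (by norm_num)
      (N_lb (a := (-5/4:ℝ)) (by norm_num) (by norm_num) (by norm_num [Qhi]))
      (N_ub (a := (-23/20:ℝ)) (by norm_num) (by norm_num) (by norm_num [Qlo]) (by norm_num [Qlo]))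
      (by norm_num) (by norm_num)
      (exp_neg_point_lb (by norm_num) (by norm_num) (by norm_num [Lb]) (by norm_num [Lb]))
      (exp_neg_point_ub (by norm_num) (by norm_num) (by norm_num [Ub]))
      (by norm_num)
  rcases le_or_gt z (-21/20) with g1 | g1
  · exact numeric_step (n := 6253/50000) (q := 1469/10000) (c := 479/250) (E := 16603/50000) g0.le g1 (by norm_num)
      (N_lb (a := (-23/20:ℝ)) (by norm_num) (by norm_num) (by norm_num [Qhi]))
      (N_ub (a := (-21/20:ℝ)) (by norm_num) (by norm_num) (by norm_num [Qlo]) (by norm_num [Qlo]))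
      (by norm_num) (by norm_num)
      (exp_neg_point_lb (by norm_num) (by norm_num) (by norm_num [Lb]) (by norm_num [Lb]))
      (exp_neg_point_ub (by norm_num) (by norm_num) (by norm_num [Ub]))
      (by norm_num)
  rcases le_or_gt z (-19/20) with g2 | g2
  · exact numeric_step (n := 2937/20000) (q := 1711/10000) (c := 441/250) (E := 10139/25000) g1.le g2 (by norm_num)
      (N_lb (a := (-21/20:ℝ)) (by norm_num) (by norm_num) (by norm_num [Qhi]))
      (N_ub (a := (-19/20:ℝ)) (by norm_num) (by norm_num) (by norm_num [Qlo]) (by norm_num [Qlo]))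
      (by norm_num) (by norm_num)
      (exp_neg_point_lb (by norm_num) (by norm_num) (by norm_num [Lb]) (by norm_num [Lb]))
      (exp_neg_point_ub (by norm_num) (by norm_num) (by norm_num [Ub]))
      (by norm_num)
  rcases le_or_gt z (-17/20) with g3 | g3
  · exact numeric_step (n := 1069/6250) (q := 1977/10000) (c := 81/50) (E := 24277/50000) g2.le g3 (by norm_num)
      (N_lb (a := (-19/20:ℝ)) (by norm_num) (by norm_num) (by norm_num [Qhi]))
      (N_ub (a := (-17/20:ℝ)) (by norm_num) (by norm_num) (by norm_num [Qlo]) (by norm_num [Qlo]))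
      (by norm_num) (by norm_num)
      (exp_neg_point_lb (by norm_num) (by norm_num) (by norm_num [Lb]) (by norm_num [Lb]))
      (exp_neg_point_ub (by norm_num) (by norm_num) (by norm_num [Ub]))
      (by norm_num)
  rcases le_or_gt z (-7/10) with g4 | g4
  · exact numeric_step (n := 3953/20000) (q := 121/500) (c := 709/500) (E := 61263/100000) g3.le g4 (by norm_num)
      (N_lb (a := (-17/20:ℝ)) (by norm_num) (by norm_num) (by norm_num [Qhi]))
      (N_ub (a := (-7/10:ℝ)) (by norm_num) (by norm_num) (by norm_num [Qlo]) (by norm_num [Qlo]))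
      (by norm_num) (by norm_num)
      (exp_neg_point_lb (by norm_num) (by norm_num) (by norm_num [Lb]) (by norm_num [Lb]))
      (exp_neg_point_ub (by norm_num) (by norm_num) (by norm_num [Ub]))
      (by norm_num)
  rcases le_or_gt z (-1/2) with g5 | g5
  · exact numeric_step (n := 4839/20000) (q := 3857/12500) (c := 47/40) (E := 77881/100000) g4.le g5 (by norm_num)
      (N_lb (a := (-7/10:ℝ)) (by norm_num) (by norm_num) (by norm_num [Qhi]))
      (N_ub (a := (-1/2:ℝ)) (by norm_num) (by norm_num) (by norm_num [Qlo]) (by norm_num [Qlo]))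
      (by norm_num) (by norm_num)
      (exp_neg_point_lb (by norm_num) (by norm_num) (by norm_num [Lb]) (by norm_num [Lb]))
      (exp_neg_point_ub (by norm_num) (by norm_num) (by norm_num [Ub]))
      (by norm_num)
  rcases le_or_gt z (-1/4) with g6 | g6
  · exact numeric_step (n := 30853/100000) (q := 40131/100000) (c := 913/1000) (E := 46971/50000) g5.le g6 (by norm_num)
      (N_lb (a := (-1/2:ℝ)) (by norm_num) (by norm_num) (by norm_num [Qhi]))
      (N_ub (a := (-1/4:ℝ)) (by norm_num) (by norm_num) (by norm_num [Qlo]) (by norm_num [Qlo]))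
      (by norm_num) (by norm_num)
      (exp_neg_point_lb (by norm_num) (by norm_num) (by norm_num [Lb]) (by norm_num [Lb]))
      (exp_neg_point_ub (by norm_num) (by norm_num) (by norm_num [Ub]))
      (by norm_num)
  · exact numeric_step (n := 40129/100000) (q := 1/2) (c := 693/1000) (E := 1) g6.le h2 (by norm_num)
      (N_lb (a := (-1/4:ℝ)) (by norm_num) (by norm_num) (by norm_num [Qhi]))
      N_zero
      (by norm_num) (by norm_num)
      (exp_neg_point_lb (by norm_num) (by norm_num) (by norm_num [Lb]) (by norm_num [Lb]))
      (exp_neg_point_ub (by norm_num) (by norm_num) (by norm_num [Ub]))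
      (by norm_num)

lemma N_half {z : ℝ} (hz : 0 ≤ z) : 1/2 ≤ stdNormalCDF z := by
  have h0 : stdNormalCDF 0 = 1/2 := by
    rw [N_eq, integral_gs_Iic_zero]
    field_simp
  rw [← h0]; exact N_mono hz

lemma tail_integrable (z : ℝ) : IntegrableOn (fun ρ : ℝ => 2*ρ*Real.exp (-ρ^2)) (Ioi z) := by
  have h := (integrable_mul_exp_neg_mul_sq (b := 1) (by norm_num)).const_mul 2
  have he : (fun ρ : ℝ => 2*(ρ*Real.exp (-1*ρ^2))) = fun ρ : ℝ => 2*ρ*Real.exp (-ρ^2) := by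
    funext ρ; rw [neg_one_mul]; ring
  rw [he] at h
  exact h.integrableOn

lemma tail_integral (z : ℝ) : ∫ ρ in Ioi z, 2*ρ*Real.exp (-ρ^2) = Real.exp (-z^2) := by
  have hderiv : ∀ x ∈ Ici z, HasDerivAt (fun ρ : ℝ => -Real.exp (-ρ^2))
      (2*x*Real.exp (-x^2)) x := by
    intro x _
    have h1 : HasDerivAt (fun ρ : ℝ => -ρ^2) (-(2*x)) x := by
      simpa using (hasDerivAt_pow 2 x).fun_neg
    have h2 := (h1.exp).neg
    refine h2.congr_deriv ?_; ring
  have htend : Tendsto (fun ρ : ℝ => -Real.exp (-ρ^2)) atTop (𝓝 0) := by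
    have h2 : Tendsto (fun ρ : ℝ => -ρ^2) atTop atBot :=
      tendsto_neg_atBot_iff.mpr (tendsto_pow_atTop two_ne_zero)
    have := (Real.tendsto_exp_atBot.comp h2).neg
    simpa using this
  have := MeasureTheory.integral_Ioi_of_hasDerivAt_of_tendsto' hderiv (tail_integrable z) htend
  rw [this]; simp

lemma rho_exp_le (ρ : ℝ) : ρ * Real.exp (-ρ^2/2) ≤ Real.exp (-(1:ℝ)/2) := by
  have h1 : ρ ≤ Real.exp ((ρ^2-1)/2) := by
    have := Real.add_one_le_exp ((ρ^2-1)/2)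
    nlinarith [sq_nonneg (ρ-1)]
  have h2 := mul_le_mul_of_nonneg_right h1 (Real.exp_pos (-ρ^2/2)).le
  rw [← Real.exp_add] at h2
  calc ρ * Real.exp (-ρ^2/2) ≤ Real.exp ((ρ^2-1)/2 + -ρ^2/2) := h2
  _ = Real.exp (-(1:ℝ)/2) := by ring_nf

lemma two_sqrt2pi_exp_le : 2 * Real.sqrt (2*π) * Real.exp (-(1:ℝ)/2) ≤ π := by
  have ha : (Real.exp (-(1:ℝ)/2))^2 = (Real.exp 1)⁻¹ := by
    rw [← Real.exp_nat_mul, ← Real.exp_neg]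
    norm_num
  apply le_of_pow_le_pow_left₀ two_ne_zero Real.pi_pos.le
  have hsq : (2 * Real.sqrt (2*π) * Real.exp (-(1:ℝ)/2))^2 = 8*π*(Real.exp 1)⁻¹ := by
    rw [mul_pow, mul_pow, sqrt2pi_sq, ha]; ring
  rw [hsq]
  have he := Real.exp_one_gt_d9
  have hπ := Real.pi_gt_d6
  have hepos := Real.exp_pos 1
  rw [mul_inv_le_iff₀ hepos]
  nlinarith [Real.pi_pos]

lemma pointwise_tail (ρ : ℝ) (hρ : 0 ≤ ρ) :
    Real.sqrt (2*π)/π * (2*ρ*Real.exp (-ρ^2)) ≤ gs ρ := by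
  have key : Real.sqrt (2*π) * (2*ρ*Real.exp (-ρ^2/2)) ≤ π := by
    have h1 := rho_exp_le ρ
    have h2 := two_sqrt2pi_exp_le
    nlinarith [sqrt2pi_pos, Real.exp_pos (-ρ^2/2)]
  have hsplit : Real.exp (-ρ^2) = Real.exp (-ρ^2/2) * Real.exp (-ρ^2/2) := by
    rw [← Real.exp_add]; ring_nf
  have hgs : gs ρ = Real.exp (-ρ^2/2) := by simp [gs]
  rw [hsplit, hgs]
  have hπ := Real.pi_pos
  rw [div_mul_eq_mul_div, div_le_iff₀ hπ]
  nlinarith [Real.exp_pos (-ρ^2/2), sqrt2pi_pos]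

lemma tail_lb {z : ℝ} (hz : 0 ≤ z) :
    Real.exp (-z^2)/π ≤ 1 - stdNormalCDF z := by
  have hQ : 1 - stdNormalCDF z = (Real.sqrt (2*π))⁻¹ * ∫ ρ in Ioi z, gs ρ := by
    have hsplit := intervalIntegral.integral_Iic_add_Ioi (b := z)
      integrable_gs.integrableOn integrable_gs.integrableOn
    rw [integral_gs] at hsplit
    rw [N_eq]
    have hkey : (Real.sqrt (2*π))⁻¹ * (∫ ρ in Iic z, gs ρ) + (Real.sqrt (2*π))⁻¹ * ∫ ρ in Ioi z, gs ρ = 1 := by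
      rw [← mul_add, hsplit]
      exact inv_mul_cancel₀ sqrt2pi_pos.ne'
    linarith
  rw [hQ]
  have hmono : Real.sqrt (2*π)/π * Real.exp (-z^2) ≤ ∫ ρ in Ioi z, gs ρ := by
    have h1 : ∫ ρ in Ioi z, Real.sqrt (2*π)/π * (2*ρ*Real.exp (-ρ^2))
        = Real.sqrt (2*π)/π * Real.exp (-z^2) := by
      rw [integral_const_mul, tail_integral]
    rw [← h1]
    apply setIntegral_mono_on ((tail_integrable z).const_mul _)
      integrable_gs.integrableOn measurableSet_Ioi
    intro ρ hρ
    exact pointwise_tail ρ (le_trans hz (le_of_lt hρ))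
  have hs := sqrt2pi_pos
  have hπ := Real.pi_pos
  calc Real.exp (-z^2)/π = (Real.sqrt (2*π))⁻¹ * (Real.sqrt (2*π)/π * Real.exp (-z^2)) := by
        field_simp
  _ ≤ _ := by
    apply mul_le_mul_of_nonneg_left hmono (by positivity)

lemma pos_case {z : ℝ} (hz : 0 ≤ z) :
    Real.exp (-z^2) ≤ 4*π*(stdNormalCDF z)^2*(-Real.log (stdNormalCDF z)) := by
  have hN := N_half hz
  have hNpos := N_pos z
  have hL : 1 - stdNormalCDF z ≤ -Real.log (stdNormalCDF z) := by
    linarith [Real.log_le_sub_one_of_pos hNpos]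
  have htail := tail_lb hz
  have hπ := Real.pi_pos
  have hexp := Real.exp_pos (-z^2)
  have hLlb : Real.exp (-z^2)/π ≤ -Real.log (stdNormalCDF z) := by linarith
  have hsq : 1/4 ≤ (stdNormalCDF z)^2 := by nlinarith
  calc Real.exp (-z^2) = 4*π*(1/4)*(Real.exp (-z^2)/π) := by field_simp
  _ ≤ 4*π*(stdNormalCDF z)^2*(-Real.log (stdNormalCDF z)) := by
      apply mul_le_mul (by nlinarith) hLlb (by positivity) (by positivity)

lemma hasDerivAt_gs (ρ : ℝ) : HasDerivAt gs (-ρ * gs ρ) ρ := by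
  have h1 : HasDerivAt (fun ρ : ℝ => -ρ^2/2) (-ρ) ρ := by
    have := (hasDerivAt_pow 2 ρ).fun_neg.div_const 2
    refine this.congr_deriv ?_; push_cast; ring
  have h2 := h1.exp
  refine h2.congr_deriv ?_; simp [gs]; ring

lemma gs_tendsto_atTop : Tendsto gs atTop (𝓝 0) := by
  have h2 : Tendsto (fun ρ : ℝ => -ρ^2/2) atTop atBot := by
    apply Tendsto.atBot_div_const (by norm_num : (0:ℝ) < 2)
    exact tendsto_neg_atBot_iff.mpr (tendsto_pow_atTop two_ne_zero)
  exact Real.tendsto_exp_atBot.comp h2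

lemma gs_tendsto_atBot : Tendsto gs atBot (𝓝 0) := by
  have h := gs_tendsto_atTop.comp tendsto_neg_atBot_atTop
  have : (gs ∘ fun ρ : ℝ => -ρ) = gs := by funext ρ; simp [gs]
  rwa [this] at h

lemma integrable_rho_gs : Integrable (fun ρ : ℝ => -ρ * gs ρ) := by
  have h := (integrable_mul_exp_neg_mul_sq (b := 1/2) (by norm_num)).neg
  apply h.congr
  apply Filter.Eventually.of_forall
  intro ρ
  simp only [Pi.neg_apply, gs]
  rw [show -ρ ^ 2 / 2 = -(1/2*ρ^2) by ring]
  ring_nf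

lemma ftc_rho_gs (z : ℝ) : ∫ ρ in Iic z, (-ρ * gs ρ) = gs z := by
  have h := MeasureTheory.integral_Iic_of_hasDerivAt_of_tendsto'
    (f := gs) (f' := fun ρ => -ρ * gs ρ) (a := z)
    (fun x _ => hasDerivAt_gs x) integrable_rho_gs.integrableOn gs_tendsto_atBot
  rw [h]; simp

lemma mills_ub {z : ℝ} (hz : z < 0) : ∫ ρ in Iic z, gs ρ ≤ gs z / (-z) := by
  have hmono : ∫ ρ in Iic z, gs ρ ≤ ∫ ρ in Iic z, (-z)⁻¹ * (-ρ * gs ρ) := by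
    apply setIntegral_mono_on integrable_gs.integrableOn
      (integrable_rho_gs.integrableOn.const_mul _) measurableSet_Iic
    intro ρ hρ
    rw [mem_Iic] at hρ
    have hρz : -z ≤ -ρ := by linarith
    have hzp : 0 < -z := by linarith
    rw [inv_mul_eq_div, le_div_iff₀ hzp]
    nlinarith [gs_pos ρ]
  rw [integral_const_mul, ftc_rho_gs] at hmono
  calc ∫ ρ in Iic z, gs ρ ≤ (-z)⁻¹ * gs z := hmono
  _ = gs z / (-z) := by ring

lemma sigma_pos (ρ : ℝ) : 0 < Real.sqrt (ρ^2+4) := Real.sqrt_pos.mpr (by positivity)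
lemma sigma_sq (ρ : ℝ) : (Real.sqrt (ρ^2+4))^2 = ρ^2+4 := Real.sq_sqrt (by positivity)
lemma sigma_gt (ρ : ℝ) : -ρ < Real.sqrt (ρ^2+4) := by
  nlinarith [sigma_pos ρ, sigma_sq ρ, sq_nonneg (Real.sqrt (ρ^2+4) + ρ)]

-- Birnbaum lower bound

noncomputable def bg (ρ : ℝ) : ℝ := gs ρ * ((Real.sqrt (ρ^2+4) + ρ)/2)

noncomputable def bg' (ρ : ℝ) : ℝ :=
  gs ρ * ((ρ/Real.sqrt (ρ^2+4) + 1)/2 - ρ*((Real.sqrt (ρ^2+4) + ρ)/2))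

lemma hasDerivAt_bg (ρ : ℝ) : HasDerivAt bg (bg' ρ) ρ := by
  have hσ : HasDerivAt (fun ρ : ℝ => Real.sqrt (ρ^2+4)) (ρ/Real.sqrt (ρ^2+4)) ρ := by
    have hinner : HasDerivAt (fun ρ : ℝ => ρ^2+4) (2*ρ) ρ := by
      have := (hasDerivAt_pow 2 ρ).add_const 4
      refine this.congr_deriv ?_; push_cast; ring
    have h := (Real.hasDerivAt_sqrt (by positivity : ρ^2+4 ≠ 0)).comp ρ hinner
    refine h.congr_deriv ?_
    field_simp
  have h2 : HasDerivAt (fun ρ : ℝ => (Real.sqrt (ρ^2+4) + ρ)/2)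
      ((ρ/Real.sqrt (ρ^2+4) + 1)/2) ρ := (hσ.add (hasDerivAt_id ρ)).div_const 2
  have h3 := (hasDerivAt_gs ρ).mul h2
  refine h3.congr_deriv ?_
  simp only [bg']
  ring

lemma bg'_le_gs (ρ : ℝ) : bg' ρ ≤ gs ρ := by
  set σ := Real.sqrt (ρ^2+4) with hσdef
  have hσ2 := sigma_sq ρ
  have hσp := sigma_pos ρ
  have hW : (ρ/σ + 1)/2 - ρ*((σ + ρ)/2) = (ρ + σ - ρ*σ^2 - ρ^2*σ)/(2*σ) := by
    field_simp [show σ ≠ 0 from hσp.ne']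
    ring
  have hkey : ρ + σ - ρ*σ^2 - ρ^2*σ ≤ 2*σ := by
    have hb : 0 ≤ σ*(1+ρ^2) := by positivity
    have hd : (σ*(1+ρ^2))^2 - (ρ*(ρ^2+3))^2 = 4 := by
      have : (σ*(1+ρ^2))^2 = (ρ^2+4)*(1+ρ^2)^2 := by
        rw [show (σ*(1+ρ^2))^2 = σ^2*(1+ρ^2)^2 from by ring, hσ2]
      rw [this]; ring
    have hab : -(ρ*(ρ^2+3)) ≤ σ*(1+ρ^2) := by nlinarith
    nlinarith [hσ2]
  have hW1 : (ρ/σ + 1)/2 - ρ*((σ + ρ)/2) ≤ 1 := by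
    rw [hW, div_le_one (by positivity)]
    linarith
  have := mul_le_mul_of_nonneg_left hW1 (gs_nonneg ρ)
  simpa [bg'] using this

lemma bg_nonneg_le {ρ : ℝ} (hρ : ρ ≤ 0) : 0 ≤ bg ρ ∧ bg ρ ≤ gs ρ := by
  have hσ2 := sigma_sq ρ
  have hσp := sigma_pos ρ
  have hgt := sigma_gt ρ
  constructor
  · apply mul_nonneg (gs_nonneg ρ); linarith
  · have hle : Real.sqrt (ρ^2+4) ≤ 2 - ρ := by
      rw [show (2:ℝ) - ρ = Real.sqrt ((2-ρ)^2) from (Real.sqrt_sq (by linarith)).symm]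
      apply Real.sqrt_le_sqrt; nlinarith
    have h1 : (Real.sqrt (ρ^2+4) + ρ)/2 ≤ 1 := by linarith
    calc bg ρ ≤ gs ρ * 1 := mul_le_mul_of_nonneg_left h1 (gs_nonneg ρ)
    _ = gs ρ := mul_one _

lemma bg_tendsto : Tendsto bg atBot (𝓝 0) := by
  apply squeeze_zero' (Filter.eventually_atBot.mpr ⟨0, fun ρ hρ => (bg_nonneg_le hρ).1⟩)
    (Filter.eventually_atBot.mpr ⟨0, fun ρ hρ => (bg_nonneg_le hρ).2⟩) gs_tendsto_atBot

lemma continuous_bg' : Continuous bg' := by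
  have hσc : Continuous (fun ρ : ℝ => Real.sqrt (ρ^2+4)) :=
    Real.continuous_sqrt.comp (by continuity)
  have hgc : Continuous gs := Real.continuous_exp.comp (by continuity)
  apply hgc.mul
  apply Continuous.sub
  · apply Continuous.div_const
    apply Continuous.add _ continuous_const
    exact Continuous.div continuous_id hσc (fun ρ => (sigma_pos ρ).ne')
  · exact continuous_id.mul ((hσc.add continuous_id).div_const 2)

lemma integrableOn_bg' (z : ℝ) (hz : z ≤ 0) : IntegrableOn bg' (Iic z) := by
  apply Integrable.mono' ((integrable_gs.const_mul 3).integrableOn)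
    continuous_bg'.aestronglyMeasurable.restrict
  rw [ae_restrict_iff' measurableSet_Iic]
  apply Filter.Eventually.of_forall
  intro ρ hρ
  rw [mem_Iic] at hρ
  have hρ0 : ρ ≤ 0 := le_trans hρ hz
  set σ := Real.sqrt (ρ^2+4)
  have hσ2 := sigma_sq ρ
  have hσp := sigma_pos ρ
  have hgt := sigma_gt ρ
  have hdiv : -1 ≤ ρ/σ ∧ ρ/σ ≤ 1 := by
    constructor
    · rw [le_div_iff₀ hσp]; nlinarith
    · rw [div_le_iff₀ hσp]; nlinarith
  have hu1 : 0 ≤ -ρ*(σ+ρ) := by nlinarith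
  have hu2 : -ρ*(σ+ρ) ≤ 4 := by nlinarith
  have hW0 : 0 ≤ (ρ/σ + 1)/2 - ρ*((σ + ρ)/2) := by nlinarith [hdiv.1]
  have hW3 : (ρ/σ + 1)/2 - ρ*((σ + ρ)/2) ≤ 3 := by nlinarith [hdiv.2]
  have : bg' ρ = gs ρ * ((ρ/σ + 1)/2 - ρ*((σ + ρ)/2)) := rfl
  rw [Real.norm_eq_abs, this, abs_of_nonneg (mul_nonneg (gs_nonneg ρ) hW0)]
  nlinarith [gs_pos ρ]

lemma birnbaum {z : ℝ} (hz : z ≤ 0) :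
    gs z * ((Real.sqrt (z^2+4) + z)/2) ≤ ∫ ρ in Iic z, gs ρ := by
  have hftc := MeasureTheory.integral_Iic_of_hasDerivAt_of_tendsto'
    (f := bg) (f' := bg') (a := z)
    (fun x _ => hasDerivAt_bg x) (integrableOn_bg' z hz) bg_tendsto
  have hmono : ∫ ρ in Iic z, bg' ρ ≤ ∫ ρ in Iic z, gs ρ :=
    setIntegral_mono_on (integrableOn_bg' z hz) integrable_gs.integrableOn
      measurableSet_Iic (fun ρ _ => bg'_le_gs ρ)
  rw [hftc] at hmono
  simpa [bg] using hmono

lemma log_two_pi_lb : (183/100 : ℝ) ≤ Real.log (2*π) := by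
  have hr : (16025/100000 : ℝ) ≤ Real.exp (-(183/100)) := by
    apply exp_neg_point_lb (by norm_num) (by norm_num) (by norm_num [Lb]) (by norm_num [Lb])
  have hπ := Real.pi_gt_d6
  have h1 : Real.exp (183/100) ≤ 2*π := by
    have h2 : Real.exp (183/100) = (Real.exp (-(183/100)))⁻¹ := by
      rw [← Real.exp_neg]; norm_num
    rw [h2]
    calc (Real.exp (-(183/100)))⁻¹ ≤ ((16025/100000 : ℝ))⁻¹ :=
          inv_anti₀ (by norm_num) hr
    _ ≤ 2*π := by rw [show ((16025/100000 : ℝ))⁻¹ = 100000/16025 by norm_num]; nlinarith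
  rw [← Real.exp_le_exp, Real.exp_log (by positivity)]
  exact h1

lemma log_sqrt2pi_lb : (183/200 : ℝ) ≤ Real.log (Real.sqrt (2*π)) := by
  rw [Real.log_sqrt (by positivity)]
  linarith [log_two_pi_lb]

-- key algebraic inequality

lemma key_alg {z : ℝ} (hz : z ≤ 0) :
    1 ≤ ((Real.sqrt (z^2+4) + z)/2)^2 * (z^2 + 11/5) := by
  set σ := Real.sqrt (z^2+4)
  have hσ2 := sigma_sq z
  have hσp := sigma_pos z
  have hT2 : (2*(z^2+11/5)*z*σ)^2 = 4*z^2*(z^2+4)*(z^2+11/5)^2 := by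
    rw [show (2*(z^2+11/5)*z*σ)^2 = 4*z^2*σ^2*(z^2+11/5)^2 from by ring, hσ2]
  have hP : (0:ℝ) < 2*z^4 + 42/5*z^2 + 24/5 := by positivity
  have hdiff : (2*z^4 + 42/5*z^2 + 24/5)^2 - (2*(z^2+11/5)*z*σ)^2
      = 16/5*z^2 + 576/25 := by
    rw [hT2]; ring
  -- G = P + T ≥ δ > 0 where T = 2(z²+2.2)zσ
  have hG : 0 ≤ 2*z^4 + 42/5*z^2 + 24/5 + 2*(z^2+11/5)*z*σ := by
    by_contra hcon
    push_neg at hcon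
    have hT : 2*(z^2+11/5)*z*σ < -(2*z^4 + 42/5*z^2 + 24/5) := by linarith
    nlinarith [hdiff, hP, hT]
  nlinarith [hσ2, hσp, hG, sq_nonneg (σ+z)]

lemma neg_case {z : ℝ} (hz : z ≤ -5/4) :
    Real.exp (-z^2) ≤ 4*π*(stdNormalCDF z)^2*(-Real.log (stdNormalCDF z)) := by
  have hz0 : z < 0 := by linarith
  have hNpos := N_pos z
  have hs := sqrt2pi_pos
  have hgs := gs_pos z
  set σ := Real.sqrt (z^2+4)
  have hσp := sigma_pos z
  have hσgt := sigma_gt z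
  have hm : 0 < (σ + z)/2 := by linarith
  -- lower bound on N
  have hNlb : (Real.sqrt (2*π))⁻¹ * (gs z * ((σ + z)/2)) ≤ stdNormalCDF z := by
    rw [N_eq]
    exact mul_le_mul_of_nonneg_left (birnbaum hz0.le) (by positivity)
  -- upper bound on N and log bound
  have hNub : stdNormalCDF z ≤ gs z / (Real.sqrt (2*π) * (-z)) := by
    rw [N_eq]
    have := mul_le_mul_of_nonneg_left (mills_ub hz0) (le_of_lt (inv_pos.mpr hs))
    calc (Real.sqrt (2*π))⁻¹ * ∫ ρ in Iic z, gs ρ ≤ (Real.sqrt (2*π))⁻¹ * (gs z / (-z)) := this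
    _ = gs z / (Real.sqrt (2*π) * (-z)) := by
        rw [div_eq_mul_inv, div_eq_mul_inv, mul_inv]
        ring
  have hlogx : (1/5 : ℝ) ≤ Real.log (-z) := by
    have h1 := Real.log_le_sub_one_of_pos (show (0:ℝ) < (-z)⁻¹ by
      rw [inv_pos]; linarith)
    rw [Real.log_inv] at h1
    have h2 : (-z)⁻¹ ≤ 4/5 := by
      rw [inv_le_comm₀ (by linarith) (by norm_num)]
      linarith
    linarith
  have hL : z^2/2 + 183/200 + 1/5 ≤ -Real.log (stdNormalCDF z) := by
    have hlogN : Real.log (stdNormalCDF z) ≤ Real.log (gs z / (Real.sqrt (2*π) * (-z))) :=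
      Real.log_le_log hNpos hNub
    have hsplit : Real.log (gs z / (Real.sqrt (2*π) * (-z)))
        = (-z^2/2) - (Real.log (Real.sqrt (2*π)) + Real.log (-z)) := by
      have hne : Real.sqrt (2*π) * (-z) ≠ 0 := by
        apply mul_ne_zero hs.ne'
        intro hcc
        have : z = 0 := by linarith [neg_eq_zero.mp hcc]
        linarith
      rw [Real.log_div hgs.ne' hne, Real.log_mul hs.ne' (by
        intro hcc
        have : z = 0 := by linarith [neg_eq_zero.mp hcc]
        linarith)]
      congr 1
      simp [gs, Real.log_exp]
    rw [hsplit] at hlogN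
    have := log_sqrt2pi_lb
    linarith
  -- assemble
  have hNsq : ((Real.sqrt (2*π))⁻¹ * (gs z * ((σ + z)/2)))^2 ≤ (stdNormalCDF z)^2 := by
    apply pow_le_pow_left₀ (by positivity) hNlb
  have hgs2 : (gs z)^2 = Real.exp (-z^2) := by
    rw [show (gs z)^2 = gs z * gs z from sq (gs z) ▸ rfl]
    simp only [gs]
    rw [← Real.exp_add]
    congr 1; ring
  have hinv2 : ((Real.sqrt (2*π))⁻¹)^2 = (2*π)⁻¹ := by
    rw [inv_pow, sqrt2pi_sq]
  have hkey := key_alg hz0.le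
  have hLpos : (0:ℝ) < z^2/2 + 183/200 + 1/5 := by positivity
  have hQ : Real.exp (-z^2) * (((σ + z)/2)^2 * (z^2 + 11/5)) ≤
      4*π*(stdNormalCDF z)^2*(-Real.log (stdNormalCDF z)) := by
    have e1 : ((Real.sqrt (2*π))⁻¹ * (gs z * ((σ + z)/2)))^2
        = (2*π)⁻¹ * (Real.exp (-z^2) * ((σ + z)/2)^2) := by
      rw [mul_pow, mul_pow, hinv2, hgs2]
    have e2 : 2*(z^2/2 + 183/200 + 1/5) ≥ z^2 + 11/5 := by nlinarith
    have hπ := Real.pi_pos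
    have hmono := mul_le_mul hNsq hL hLpos.le (sq_nonneg (stdNormalCDF z))
    rw [e1] at hmono
    calc Real.exp (-z^2) * (((σ + z)/2)^2 * (z^2 + 11/5))
        ≤ Real.exp (-z^2) * (((σ + z)/2)^2 * (2*(z^2/2 + 183/200 + 1/5))) := by
          nlinarith [Real.exp_pos (-z^2), sq_nonneg ((σ + z)/2)]
    _ = 4*π*((2*π)⁻¹ * (Real.exp (-z^2) * ((σ + z)/2)^2) * (z^2/2 + 183/200 + 1/5)) := by
          field_simp
          ring
    _ ≤ 4*π*((stdNormalCDF z)^2 * (-Real.log (stdNormalCDF z))) := by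
          apply mul_le_mul_of_nonneg_left hmono (by positivity)
    _ = 4*π*(stdNormalCDF z)^2*(-Real.log (stdNormalCDF z)) := by ring
  calc Real.exp (-z^2) = Real.exp (-z^2) * 1 := (mul_one _).symm
  _ ≤ Real.exp (-z^2) * (((σ + z)/2)^2 * (z^2 + 11/5)) := by
      apply mul_le_mul_of_nonneg_left hkey (Real.exp_pos _).le
  _ ≤ _ := hQ

lemma sq_ineq (z : ℝ) :
    Real.exp (-z^2) ≤ 4*π*(stdNormalCDF z)^2*(-Real.log (stdNormalCDF z)) := by
  rcases le_or_gt z (-5/4) with h | h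
  · exact neg_case h
  rcases le_or_gt z 0 with h2 | h2
  · exact numeric_region h.le h2
  · exact pos_case h2.le

end Aux

open Real in
/-- For every real `z`, `exp(-z²/2) ≤ 2√π · N(z) · √(-log N(z))`. -/
theorem normal_cdf_log_inequality (z : ℝ) :
    Real.exp (-z ^ 2 / 2) ≤
      2 * Real.sqrt Real.pi * stdNormalCDF z * Real.sqrt (-Real.log (stdNormalCDF z)) := by
  have h := sq_ineq z
  have hNpos := N_pos z
  have hL : 0 ≤ -Real.log (stdNormalCDF z) := by
    by_contra hc
    push_neg at hc
    have h4 : 0 < 4*π*(stdNormalCDF z)^2 :=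
      mul_pos (by positivity) (pow_pos hNpos 2)
    nlinarith [Real.exp_pos (-z^2), mul_neg_of_pos_of_neg h4 hc]
  have e1 : Real.exp (-z^2/2) = Real.sqrt (Real.exp (-z^2)) := by
    rw [show (-z^2/2 : ℝ) = (-z^2)/2 by ring, Real.exp_half]
  have e2 : Real.sqrt (4*π*(stdNormalCDF z)^2*(-Real.log (stdNormalCDF z)))
      = 2*Real.sqrt π*(stdNormalCDF z)*Real.sqrt (-Real.log (stdNormalCDF z)) := by
    rw [show 4*π*(stdNormalCDF z)^2*(-Real.log (stdNormalCDF z))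
        = (2*Real.sqrt π*(stdNormalCDF z))^2*(-Real.log (stdNormalCDF z)) by
      rw [mul_pow, mul_pow, Real.sq_sqrt Real.pi_pos.le]; ring]
    rw [Real.sqrt_mul (sq_nonneg _), Real.sqrt_sq (by positivity)]
  calc Real.exp (-z^2/2) = Real.sqrt (Real.exp (-z^2)) := e1
  _ ≤ Real.sqrt (4*π*(stdNormalCDF z)^2*(-Real.log (stdNormalCDF z))) := Real.sqrt_le_sqrt h
  _ = _ := e2
end

section
/- There is a universal constant C > 0 such that for all real a and all η > 0, ∫_{a+η}^∞ e^{-z²/2} dz ≥ exp(-η²/2 - C·η·max(a,1)) · ∫_a^∞ e^{-z²/2} dz. -/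
open MeasureTheory Set

private lemma gauss_eq : (fun w : ℝ => Real.exp (-w ^ 2 / 2))
    = fun w : ℝ => Real.exp (-(1/2 : ℝ) * w ^ 2) := by
  funext w; congr 1; ring

private lemma gauss_integrable : Integrable (fun w : ℝ => Real.exp (-w ^ 2 / 2)) := by
  rw [gauss_eq]; exact integrable_exp_neg_mul_sq (by norm_num)

private lemma gauss_mul_integrable : Integrable (fun w : ℝ => w * Real.exp (-w ^ 2 / 2)) := by
  have h := integrable_mul_exp_neg_mul_sq (by norm_num : (0:ℝ) < 1/2)
  refine h.congr ?_
  filter_upwards with w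
  congr 1; ring

private lemma gauss_tail_mul (K : ℝ) :
    ∫ w in Ioi K, w * Real.exp (-w ^ 2 / 2) = Real.exp (-K ^ 2 / 2) := by
  have h := integral_Ioi_of_hasDerivAt_of_tendsto
    (f := fun w : ℝ => -Real.exp (-w ^ 2 / 2))
    (f' := fun w : ℝ => w * Real.exp (-w ^ 2 / 2)) (a := K) (m := 0)
    ?_ ?_ ?_ ?_
  · rw [h]; simp
  · exact (Continuous.continuousWithinAt (by fun_prop))
  · intro x hx
    have h1 : HasDerivAt (fun w : ℝ => -w ^ 2 / 2) (-x) x := by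
      have := ((hasDerivAt_pow 2 x).neg).div_const 2
      simpa using this.congr_deriv (by push_cast; ring)
    have := (h1.exp).neg
    exact this.congr_deriv (by ring)
  · exact gauss_mul_integrable.integrableOn
  · have h1 : Filter.Tendsto (fun w : ℝ => -w ^ 2 / 2) Filter.atTop Filter.atBot := by
      apply Filter.Tendsto.atBot_div_const (by norm_num : (0:ℝ) < 2)
      exact Filter.tendsto_neg_atBot_iff.mpr (Filter.tendsto_pow_atTop (by norm_num))
    have := (Real.tendsto_exp_atBot.comp h1).neg
    simpa using this

set_option maxHeartbeats 1000000

/-- There is a universal constant `C > 0` such that for all real `a` and all `η > 0`,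
`∫_{a+η}^∞ e^{-z²/2} dz ≥ exp(-η²/2 - C·η·max(a,1)) · ∫_a^∞ e^{-z²/2} dz`. -/
theorem gaussian_tail_shift_lower_bound :
    ∃ C : ℝ, 0 < C ∧ ∀ a η : ℝ, 0 < η →
      Real.exp (-η ^ 2 / 2 - C * η * max a 1) * (∫ z in Set.Ioi a, Real.exp (-z ^ 2 / 2)) ≤
        ∫ z in Set.Ioi (a + η), Real.exp (-z ^ 2 / 2) := by
  refine ⟨3, by norm_num, fun a η hη => ?_⟩
  set M := max a 1 with hMdef
  have hM1 : (1:ℝ) ≤ M := le_max_right a 1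
  have haM : a ≤ M := le_max_left a 1
  set K := 3 * M with hKdef
  have haK : a < K := by nlinarith
  -- translation
  have hshift : (∫ z in Ioi (a + η), Real.exp (-z ^ 2 / 2))
      = ∫ w in Ioi a, Real.exp (-(w + η) ^ 2 / 2) := by
    have h := (measurePreserving_add_right volume η).setIntegral_preimage_emb
      (MeasurableEquiv.addRight η).measurableEmbedding
      (fun z => Real.exp (-z ^ 2 / 2)) (Ioi (a + η))
    simp only [preimage_add_const_Ioi, add_sub_cancel_right] at h
    exact h.symm
  -- pointwise factorization
  have hfact : ∀ w : ℝ, Real.exp (-(w + η) ^ 2 / 2)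
      = Real.exp (-η ^ 2 / 2) * (Real.exp (-(η * w)) * Real.exp (-w ^ 2 / 2)) := by
    intro w; rw [← Real.exp_add, ← Real.exp_add]; congr 1; ring
  have hsplit : (∫ w in Ioi a, Real.exp (-(w + η) ^ 2 / 2))
      = Real.exp (-η ^ 2 / 2) * ∫ w in Ioi a, Real.exp (-(η * w)) * Real.exp (-w ^ 2 / 2) := by
    simp_rw [hfact, integral_const_mul]
  rw [hshift, hsplit, show -η ^ 2 / 2 - 3 * η * max a 1 = -η ^ 2 / 2 + -(η * K) by
    rw [hKdef, hMdef]; ring, Real.exp_add, mul_assoc]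
  have hexp2 : (0:ℝ) < Real.exp (-η ^ 2 / 2) := Real.exp_pos _
  refine mul_le_mul_of_nonneg_left ?_ hexp2.le
  -- key inequality: exp(-ηK) * ∫ e^{-w²/2} ≤ ∫ e^{-ηw} e^{-w²/2}
  have hint1 : Integrable (fun w : ℝ => Real.exp (-(η * w)) * Real.exp (-w ^ 2 / 2)) := by
    have h0 : Integrable (fun w : ℝ => Real.exp (-(w + η) ^ 2 / 2)) :=
      gauss_integrable.comp_add_right η
    have h1 := (h0.const_mul (Real.exp (η ^ 2 / 2)))
    refine h1.congr ?_
    filter_upwards with w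
    rw [← Real.exp_add, ← Real.exp_add]; congr 1; ring
  have hint2 : Integrable (fun w : ℝ => Real.exp (-(η * K)) * Real.exp (-w ^ 2 / 2)) :=
    gauss_integrable.const_mul _
  rw [← integral_const_mul, ← sub_nonneg, ← integral_sub hint1.integrableOn hint2.integrableOn]
  set D : ℝ → ℝ := fun w =>
    Real.exp (-(η * w)) * Real.exp (-w ^ 2 / 2) - Real.exp (-(η * K)) * Real.exp (-w ^ 2 / 2)
    with hDdef
  have hDint : IntegrableOn D (Ioi a) := (hint1.sub hint2).integrableOn
  have hunion : Ioi a = Ioc a K ∪ Ioi K := (Ioc_union_Ioi_eq_Ioi haK.le).symm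
  have hsum : ∫ w in Ioi a, D w = (∫ w in Ioc a K, D w) + ∫ w in Ioi K, D w := by
    rw [hunion]
    exact setIntegral_union (Ioc_disjoint_Ioi le_rfl) measurableSet_Ioi
      ((hint1.sub hint2).integrableOn) ((hint1.sub hint2).integrableOn)
  rw [hsum]
  have hKpos : (0:ℝ) < K := by nlinarith
  have hEK : (0:ℝ) < Real.exp (-(η * K)) := Real.exp_pos _
  -- bound on Ioi K
  have hB : -(η * Real.exp (-(η * K)) * Real.exp (-K ^ 2 / 2)) ≤ ∫ w in Ioi K, D w := by
    have hle : ∀ w ∈ Ioi K,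
        -(η * Real.exp (-(η * K)) * (w * Real.exp (-w ^ 2 / 2))) ≤ D w := by
      intro w hw
      have hwK : K < w := hw
      have h1 : 1 + -(η * (w - K)) ≤ Real.exp (-(η * (w - K))) := by
        have := Real.add_one_le_exp (-(η * (w - K))); linarith
      have h2 : Real.exp (-(η * w)) = Real.exp (-(η * K)) * Real.exp (-(η * (w - K))) := by
        rw [← Real.exp_add]; congr 1; ring
      have h3 : Real.exp (-(η * K)) - Real.exp (-(η * w)) ≤ η * Real.exp (-(η * K)) * w := by
        rw [h2]
        have hKnn : 0 ≤ K := hKpos.le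
        have t1 : 1 - Real.exp (-(η * (w - K))) ≤ η * (w - K) := by linarith
        have t2 : Real.exp (-(η * K)) * (1 - Real.exp (-(η * (w - K))))
            ≤ Real.exp (-(η * K)) * (η * (w - K)) := mul_le_mul_of_nonneg_left t1 hEK.le
        nlinarith [mul_nonneg (mul_nonneg hη.le hEK.le) hKnn]
      have hg : (0:ℝ) < Real.exp (-w ^ 2 / 2) := Real.exp_pos _
      have := mul_le_mul_of_nonneg_right h3 hg.le
      rw [hDdef]; nlinarith
    have hint3 : IntegrableOn
        (fun w : ℝ => -(η * Real.exp (-(η * K)) * (w * Real.exp (-w ^ 2 / 2)))) (Ioi K) := by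
      exact (((gauss_mul_integrable.const_mul (η * Real.exp (-(η * K)))).neg).integrableOn)
    calc -(η * Real.exp (-(η * K)) * Real.exp (-K ^ 2 / 2))
        = ∫ w in Ioi K, -(η * Real.exp (-(η * K)) * (w * Real.exp (-w ^ 2 / 2))) := by
          rw [integral_neg, integral_const_mul, gauss_tail_mul]
      _ ≤ ∫ w in Ioi K, D w := by
          refine setIntegral_mono_on hint3 (hDint.mono_set (Ioi_subset_Ioi haK.le))
            measurableSet_Ioi hle
  -- bound on Ioc a K
  have hA : η * Real.exp (-(η * K)) * Real.exp (-K ^ 2 / 2) ≤ ∫ w in Ioc a K, D w := by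
    have step1 : η * Real.exp (-(η * K)) * ∫ w in Ioc a K, (K - w) * Real.exp (-w ^ 2 / 2)
        ≤ ∫ w in Ioc a K, D w := by
      rw [← integral_const_mul]
      refine setIntegral_mono_on ?_ (hDint.mono_set Ioc_subset_Ioi_self) measurableSet_Ioc ?_
      · exact (Continuous.integrableOn_Ioc (by fun_prop))
      · intro w hw
        have hwK : w ≤ K := hw.2
        have h1 : η * (K - w) + 1 ≤ Real.exp (η * (K - w)) := Real.add_one_le_exp _
        have h2 : Real.exp (-(η * w)) = Real.exp (-(η * K)) * Real.exp (η * (K - w)) := by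
          rw [← Real.exp_add]; congr 1; ring
        have h3 : η * Real.exp (-(η * K)) * (K - w) ≤
            Real.exp (-(η * w)) - Real.exp (-(η * K)) := by
          rw [h2]; nlinarith
        have hg : (0:ℝ) < Real.exp (-w ^ 2 / 2) := Real.exp_pos _
        have := mul_le_mul_of_nonneg_right h3 hg.le
        rw [hDdef]; nlinarith
    have step2 : (∫ w in Ioc M (M + 1), (K - w) * Real.exp (-w ^ 2 / 2))
        ≤ ∫ w in Ioc a K, (K - w) * Real.exp (-w ^ 2 / 2) := by
      refine setIntegral_mono_set (Continuous.integrableOn_Ioc (by fun_prop)) ?_ ?_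
      · filter_upwards [ae_restrict_mem measurableSet_Ioc] with w hw
        have hwK : w ≤ K := hw.2
        have hKw : (0:ℝ) ≤ K - w := by linarith
        positivity
      · exact HasSubset.Subset.eventuallyLE (Ioc_subset_Ioc haM (by nlinarith))
    have step3 : (2 * M - 1) * Real.exp (-(M + 1) ^ 2 / 2)
        ≤ ∫ w in Ioc M (M + 1), (K - w) * Real.exp (-w ^ 2 / 2) := by
      have hvol : (volume (Ioc M (M + 1))).toReal = 1 := by
        rw [Real.volume_Ioc]; simp
      have := setIntegral_ge_of_const_le (μ := volume) (s := Ioc M (M + 1))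
        (c := (2 * M - 1) * Real.exp (-(M + 1) ^ 2 / 2))
        (f := fun w => (K - w) * Real.exp (-w ^ 2 / 2))
        measurableSet_Ioc (by rw [Real.volume_Ioc]; simp) ?_ ?_
      · rw [measureReal_def, hvol, one_smul] at this; linarith
      · intro w hw
        have h1 : 2 * M - 1 ≤ K - w := by have := hw.2; rw [hKdef]; linarith
        have h2 : Real.exp (-(M + 1) ^ 2 / 2) ≤ Real.exp (-w ^ 2 / 2) := by
          apply Real.exp_le_exp.mpr
          have hw1 : M ≤ w := hw.1.le
          have hw2 : w ≤ M + 1 := hw.2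
          nlinarith
        have h3 : (0:ℝ) < Real.exp (-(M + 1) ^ 2 / 2) := Real.exp_pos _
        nlinarith
      · exact Continuous.integrableOn_Ioc (by fun_prop)
    have step4 : Real.exp (-K ^ 2 / 2) ≤ (2 * M - 1) * Real.exp (-(M + 1) ^ 2 / 2) := by
      have h1 : Real.exp (-K ^ 2 / 2) ≤ Real.exp (-(M + 1) ^ 2 / 2) := by
        apply Real.exp_le_exp.mpr
        rw [hKdef]; nlinarith
      have h2 : (1:ℝ) ≤ 2 * M - 1 := by linarith
      nlinarith [Real.exp_pos (-(M + 1) ^ 2 / 2)]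
    have hpos : (0:ℝ) ≤ η * Real.exp (-(η * K)) := by positivity
    calc η * Real.exp (-(η * K)) * Real.exp (-K ^ 2 / 2)
        ≤ η * Real.exp (-(η * K)) * ∫ w in Ioc a K, (K - w) * Real.exp (-w ^ 2 / 2) := by
          apply mul_le_mul_of_nonneg_left _ hpos
          exact le_trans step4 (le_trans step3 step2)
      _ ≤ ∫ w in Ioc a K, D w := step1
  simp only [hDdef] at hA hB ⊢
  linarith
end

section
/- Let b : ℝ × ℝ → ℝ be such that y ↦ b(y,s) is concave for each s ∈ [t,T]. Define the functional F[y(·)] = (1/2)∫_t^T (y'(s) - b(y(s),s))² ds on C¹ paths. Let E be the set of C¹ functions y on [t,T] satisfying y'(s) ≥ b(y(s),s) for all s. If y₁, y₂ ∈ E and λ ∈ [0,1] are such that λy₁ + (1-λ)y₂ ∈ E, then F[λy₁ + (1-λ)y₂] ≤ λF[y₁] + (1-λ)F[y₂]. -/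
open MeasureTheory

/-- Convexity of the action functional `F[y] = (1/2)∫_t^T (y' - b(y(s),s))² ds` on the cone
`E = {y ∈ C¹ : y'(s) ≥ b(y(s),s)}`, when `b(·,s)` is concave: if `y₁, y₂ ∈ E` and the convex
combination `λy₁ + (1-λ)y₂ ∈ E`, then `F[λy₁+(1-λ)y₂] ≤ λF[y₁] + (1-λ)F[y₂]`. -/
theorem action_functional_convex_on_cone (t T : ℝ) (ht : t ≤ T) (b : ℝ → ℝ → ℝ)
    (hb : Continuous fun p : ℝ × ℝ => b p.1 p.2)
    (hconc : ∀ s ∈ Set.Icc t T, ConcaveOn ℝ Set.univ fun y => b y s)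
    (y₁ y₂ d₁ d₂ : ℝ → ℝ)
    (hy₁ : ∀ s ∈ Set.Icc t T, HasDerivAt y₁ (d₁ s) s)
    (hy₂ : ∀ s ∈ Set.Icc t T, HasDerivAt y₂ (d₂ s) s)
    (hd₁ : Continuous d₁) (hd₂ : Continuous d₂)
    (lam : ℝ) (hlam : lam ∈ Set.Icc (0 : ℝ) 1)
    (hE₁ : ∀ s ∈ Set.Icc t T, b (y₁ s) s ≤ d₁ s)
    (hE₂ : ∀ s ∈ Set.Icc t T, b (y₂ s) s ≤ d₂ s)
    (hEc : ∀ s ∈ Set.Icc t T,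
      b (lam * y₁ s + (1 - lam) * y₂ s) s ≤ lam * d₁ s + (1 - lam) * d₂ s) :
    (1 / 2) * (∫ s in t..T,
        (lam * d₁ s + (1 - lam) * d₂ s - b (lam * y₁ s + (1 - lam) * y₂ s) s) ^ 2) ≤
      lam * ((1 / 2) * ∫ s in t..T, (d₁ s - b (y₁ s) s) ^ 2) +
        (1 - lam) * ((1 / 2) * ∫ s in t..T, (d₂ s - b (y₂ s) s) ^ 2) := by
  obtain ⟨h0, h1⟩ := hlam
  have h1' : (0:ℝ) ≤ 1 - lam := by linarith
  have huIcc : Set.uIcc t T = Set.Icc t T := Set.uIcc_of_le ht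
  have hcy₁ : ContinuousOn y₁ (Set.Icc t T) := fun s hs =>
    (hy₁ s hs).continuousAt.continuousWithinAt
  have hcy₂ : ContinuousOn y₂ (Set.Icc t T) := fun s hs =>
    (hy₂ s hs).continuousAt.continuousWithinAt
  have hcb : ∀ y : ℝ → ℝ, ContinuousOn y (Set.Icc t T) →
      ContinuousOn (fun s => b (y s) s) (Set.Icc t T) := fun y hy =>
    by have := hb.comp_continuousOn (ContinuousOn.prodMk hy continuousOn_id); exact this
  have hf₁ : ContinuousOn (fun s => (d₁ s - b (y₁ s) s) ^ 2) (Set.Icc t T) :=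
    (hd₁.continuousOn.sub (hcb y₁ hcy₁)).pow 2
  have hf₂ : ContinuousOn (fun s => (d₂ s - b (y₂ s) s) ^ 2) (Set.Icc t T) :=
    (hd₂.continuousOn.sub (hcb y₂ hcy₂)).pow 2
  have hfc : ContinuousOn
      (fun s => (lam * d₁ s + (1 - lam) * d₂ s - b (lam * y₁ s + (1 - lam) * y₂ s) s) ^ 2)
      (Set.Icc t T) := by
    apply ContinuousOn.pow
    exact ((continuous_const.mul hd₁).add ((continuous_const.mul hd₂))).continuousOn.sub
      (hcb _ (((continuousOn_const.mul hcy₁)).add ((continuousOn_const.mul hcy₂))))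
  have hi₁ : IntervalIntegrable (fun s => (d₁ s - b (y₁ s) s) ^ 2) volume t T :=
    (huIcc ▸ hf₁).intervalIntegrable
  have hi₂ : IntervalIntegrable (fun s => (d₂ s - b (y₂ s) s) ^ 2) volume t T :=
    (huIcc ▸ hf₂).intervalIntegrable
  have hic : IntervalIntegrable
      (fun s => (lam * d₁ s + (1 - lam) * d₂ s - b (lam * y₁ s + (1 - lam) * y₂ s) s) ^ 2)
      volume t T := (huIcc ▸ hfc).intervalIntegrable
  have key : (∫ s in t..T,
      (lam * d₁ s + (1 - lam) * d₂ s - b (lam * y₁ s + (1 - lam) * y₂ s) s) ^ 2) ≤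
      ∫ s in t..T, (lam * (d₁ s - b (y₁ s) s) ^ 2 + (1 - lam) * (d₂ s - b (y₂ s) s) ^ 2) := by
    apply intervalIntegral.integral_mono_on ht hic
    · exact (hi₁.const_mul lam).add (hi₂.const_mul (1 - lam))
    · intro s hs
      have hcc := (hconc s hs).2 (Set.mem_univ (y₁ s)) (Set.mem_univ (y₂ s)) h0 h1'
        (by ring)
      simp only [smul_eq_mul] at hcc
      have h1e := hE₁ s hs
      have h2e := hE₂ s hs
      have hce := hEc s hs
      nlinarith [sq_nonneg (d₁ s - b (y₁ s) s - (d₂ s - b (y₂ s) s)), mul_nonneg h0 h1',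
        sq_nonneg (lam * d₁ s + (1 - lam) * d₂ s - b (lam * y₁ s + (1 - lam) * y₂ s) s),
        mul_nonneg h0 (sub_nonneg.mpr h1e), mul_nonneg h1' (sub_nonneg.mpr h2e)]
  have hsplit : (∫ s in t..T,
      (lam * (d₁ s - b (y₁ s) s) ^ 2 + (1 - lam) * (d₂ s - b (y₂ s) s) ^ 2)) =
      lam * (∫ s in t..T, (d₁ s - b (y₁ s) s) ^ 2) +
      (1 - lam) * (∫ s in t..T, (d₂ s - b (y₂ s) s) ^ 2) := by
    rw [intervalIntegral.integral_add (hi₁.const_mul lam) (hi₂.const_mul (1 - lam)),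
      intervalIntegral.integral_const_mul, intervalIntegral.integral_const_mul]
  rw [hsplit] at key
  linarith
end

section
/- Let μ > 0, ε > 0, and Z(s) as above solve dZ = -μZ/(T-s) ds + √ε dW on [t,T) with Z(t) = z. Then E[∫_t^T Z(s)²/(T-s)² ds] = ∞. -/
open MeasureTheory ProbabilityTheory

lemma gauss_Ioo_le (μ₀ a b : ℝ) (v : NNReal) (hv : v ≠ 0) (hab : a ≤ b) :
    gaussianReal μ₀ v (Set.Ioo a b) ≤ ENNReal.ofReal ((b - a) * (Real.sqrt (2 * Real.pi * v))⁻¹) := by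
  rw [gaussianReal_apply_eq_integral _ hv]
  apply ENNReal.ofReal_le_ofReal
  have h1 : ∫ x in Set.Ioo a b, gaussianPDFReal μ₀ v x
      ≤ ∫ _x in Set.Ioo a b, (Real.sqrt (2 * Real.pi * v))⁻¹ := by
    apply setIntegral_mono_on
    · exact (integrable_gaussianPDFReal _ _).restrict
    · exact integrableOn_const (by simp [Real.volume_Ioo])
    · exact measurableSet_Ioo
    · intro x _
      rw [gaussianPDFReal]
      have hexp : Real.exp (-(x - μ₀) ^ 2 / (2 * v)) ≤ 1 := by
        rw [Real.exp_le_one_iff]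
        apply div_nonpos_of_nonpos_of_nonneg
        · simpa using sq_nonneg (x - μ₀)
        · positivity
      calc (Real.sqrt (2 * Real.pi * v))⁻¹ * Real.exp (-(x - μ₀) ^ 2 / (2 * v))
          ≤ (Real.sqrt (2 * Real.pi * v))⁻¹ * 1 := by
            apply mul_le_mul_of_nonneg_left hexp (by positivity)
        _ = (Real.sqrt (2 * Real.pi * v))⁻¹ := mul_one _
  refine h1.trans ?_
  rw [setIntegral_const]
  simp [Real.volume_Ioo, ENNReal.toReal_ofReal (sub_nonneg.2 hab), smul_eq_mul, max_eq_left (sub_nonneg.2 hab)]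

lemma gauss_sq_moment (μ₀ : ℝ) (v : NNReal) :
    ENNReal.ofReal ((1 - 2 / Real.sqrt (2 * Real.pi)) * v)
      ≤ ∫⁻ x, ENNReal.ofReal (x ^ 2) ∂(gaussianReal μ₀ v) := by
  rcases eq_or_ne v 0 with rfl | hv
  · simp
  · have hvpos : (0:ℝ) < v := by positivity
    set sv := Real.sqrt v with hsv
    have hsvpos : 0 < sv := Real.sqrt_pos.2 hvpos
    set S := (Set.Ioo (-sv) sv)ᶜ with hS
    have h1 : ∫⁻ x in S, ENNReal.ofReal (x ^ 2) ∂(gaussianReal μ₀ v)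
        ≤ ∫⁻ x, ENNReal.ofReal (x ^ 2) ∂(gaussianReal μ₀ v) := setLIntegral_le_lintegral _ _
    refine le_trans ?_ h1
    have h2 : ∫⁻ _x in S, ENNReal.ofReal (v : ℝ) ∂(gaussianReal μ₀ v)
        ≤ ∫⁻ x in S, ENNReal.ofReal (x ^ 2) ∂(gaussianReal μ₀ v) := by
      apply setLIntegral_mono (by measurability)
      intro x hx
      apply ENNReal.ofReal_le_ofReal
      have hax : sv ≤ |x| := by
        simp only [hS, Set.mem_compl_iff, Set.mem_Ioo, not_and_or, not_lt] at hx
        rcases hx with h | h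
        · rw [abs_of_nonpos (by linarith)]; linarith
        · rw [abs_of_nonneg (by linarith)]; linarith
      calc (v:ℝ) = sv ^ 2 := (Real.sq_sqrt hvpos.le).symm
        _ ≤ |x| ^ 2 := by gcongr
        _ = x ^ 2 := sq_abs x
    refine le_trans ?_ h2
    rw [setLIntegral_const]
    have hmeas : gaussianReal μ₀ v (Set.Ioo (-sv) sv)
        ≤ ENNReal.ofReal (2 / Real.sqrt (2 * Real.pi)) := by
      refine (gauss_Ioo_le μ₀ (-sv) sv v hv (by linarith)).trans ?_
      apply ENNReal.ofReal_le_ofReal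
      rw [Real.sqrt_mul (by positivity) (v:ℝ), ← hsv]
      have h2pi : (0:ℝ) < Real.sqrt (2 * Real.pi) := Real.sqrt_pos.2 (by positivity)
      apply le_of_eq
      field_simp
      ring
    have hScompl : gaussianReal μ₀ v S = 1 - gaussianReal μ₀ v (Set.Ioo (-sv) sv) := by
      rw [hS, prob_compl_eq_one_sub measurableSet_Ioo]
    have hSge : ENNReal.ofReal (1 - 2 / Real.sqrt (2 * Real.pi)) ≤ gaussianReal μ₀ v S := by
      rw [hScompl, ENNReal.ofReal_sub _ (by positivity), ENNReal.ofReal_one]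
      exact tsub_le_tsub_left hmeas 1
    calc ENNReal.ofReal ((1 - 2 / Real.sqrt (2 * Real.pi)) * v)
        = ENNReal.ofReal (v:ℝ) * ENNReal.ofReal (1 - 2 / Real.sqrt (2 * Real.pi)) := by
          rw [← ENNReal.ofReal_mul (by positivity), mul_comm]
      _ ≤ ENNReal.ofReal (v:ℝ) * gaussianReal μ₀ v S := mul_le_mul_right hSge _

lemma lintegral_ofReal_inv_sub_eq_top {c a T : ℝ} (hc : 0 < c) (haT : a < T) :
    ∫⁻ s in Set.Ioo a T, ENNReal.ofReal (c / (T - s)) = ⊤ := by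
  by_contra hfin'
  have hfin : ∫⁻ s in Set.Ioo a T, ENNReal.ofReal (c / (T - s)) < ⊤ := Ne.lt_top hfin'
  have hnn : 0 ≤ᵐ[volume.restrict (Set.Ioo a T)] fun s => c / (T - s) := by
    filter_upwards [ae_restrict_mem measurableSet_Ioo] with s hs
    have : 0 < T - s := by simp only [Set.mem_Ioo] at hs; linarith [hs.2]
    positivity
  have hint : IntegrableOn (fun s => c / (T - s)) (Set.Ioo a T) := by
    refine ⟨(measurable_const.div (measurable_const.sub measurable_id)).aestronglyMeasurable, ?_⟩
    rw [hasFiniteIntegral_iff_ofReal hnn]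
    exact hfin
  have hint2 : IntegrableOn (fun s => (s - T)⁻¹) (Set.Ioo a T) := by
    have h := hint.const_mul (-c⁻¹)
    have heq : (fun s => (-c⁻¹) * (c / (T - s))) = fun s => (s - T)⁻¹ := by
      funext s
      rw [div_eq_mul_inv, ← mul_assoc, show -c⁻¹ * c = -1 by field_simp, neg_one_mul,
        ← inv_neg, neg_sub]
    rwa [heq] at h
  have hII : IntervalIntegrable (fun s => (s - T)⁻¹) volume a T := by
    rw [intervalIntegrable_iff, Set.uIoc_of_le haT.le]
    exact hint2.congr_set_ae (MeasureTheory.Ioo_ae_eq_Ioc (μ := volume) (a := a) (b := T)).symm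
  rcases intervalIntegrable_sub_inv_iff.mp hII with h | h
  · exact absurd h (ne_of_lt haT)
  · exact h Set.right_mem_uIcc

/-- For the solution `Z` of `dZ = -μZ/(T-s) ds + √ε dW` on `[t,T)` with `Z(t) = z`
(a Gaussian process with mean `((T-s)/(T-t))^μ z` and variance
`ε (T-s)^{2μ} ∫_t^s (T-u)^{-2μ} du`), one has `E[∫_t^T Z(s)²/(T-s)² ds] = ∞`. -/
theorem ou_bridge_expected_energy_infinite {Ω : Type*} [MeasurableSpace Ω] (P : Measure Ω)
    [IsProbabilityMeasure P] (t T z ε m : ℝ) (hm : 0 < m) (hε : 0 < ε) (ht : t < T)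
    (Z : ℝ → Ω → ℝ) (hmeas : Measurable (Function.uncurry Z))
    (hdist : ∀ s, t ≤ s → s < T →
      Measure.map (Z s) P =
        gaussianReal (((T - s) / (T - t)) ^ m * z)
          (Real.toNNReal (ε * (T - s) ^ (2 * m) * ∫ u in t..s, (T - u) ^ (-(2 * m))))) :
    (∫⁻ ω, (∫⁻ s in Set.Ioo t T, ENNReal.ofReal ((Z s ω) ^ 2 / (T - s) ^ 2)) ∂P) = ⊤ := by
  classical
  have hZs : ∀ s, Measurable (Z s) := fun s => hmeas.comp measurable_prodMk_left
  -- Tonelli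
  have hF : Measurable (Function.uncurry fun (ω : Ω) (s : ℝ) =>
      ENNReal.ofReal ((Z s ω) ^ 2 / (T - s) ^ 2)) := by
    apply Measurable.ennreal_ofReal
    exact ((hmeas.comp (measurable_snd.prodMk measurable_fst)).pow_const 2).div
      ((measurable_const.sub measurable_snd).pow_const 2)
  rw [lintegral_lintegral_swap hF.aemeasurable]
  -- constants
  set κ := 1 - 2 / Real.sqrt (2 * Real.pi) with hκdef
  have hκ : 0 < κ := by
    have h4 : (2:ℝ) < Real.sqrt (2 * Real.pi) := by
      have hpi := Real.pi_gt_three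
      have h2 : (2:ℝ) = Real.sqrt 4 := by
        rw [show (4:ℝ) = 2 ^ 2 by norm_num, Real.sqrt_sq (by norm_num : (0:ℝ) ≤ 2)]
      rw [h2]
      exact Real.sqrt_lt_sqrt (by norm_num) (by nlinarith)
    have hs : (0:ℝ) < Real.sqrt (2 * Real.pi) := by linarith
    rw [hκdef, sub_pos, div_lt_one hs]
    exact h4
  set c := κ * (ε * (2:ℝ) ^ (-(2 * m))) with hcdef
  have hc : 0 < c := by
    have : (0:ℝ) < (2:ℝ) ^ (-(2 * m)) := Real.rpow_pos_of_pos (by norm_num) _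
    positivity
  set mid := (t + T) / 2 with hmiddef
  have hmid1 : t < mid := by rw [hmiddef]; linarith
  have hmid2 : mid < T := by rw [hmiddef]; linarith
  -- pointwise lower bound on (mid, T)
  have key : ∀ s ∈ Set.Ioo mid T, ENNReal.ofReal (c / (T - s))
      ≤ ∫⁻ ω, ENNReal.ofReal ((Z s ω) ^ 2 / (T - s) ^ 2) ∂P := by
    intro s hs
    obtain ⟨hms, hsT⟩ := hs
    have hts : t < s := lt_trans hmid1 hms
    have hτ : (0:ℝ) < T - s := by linarith
    set f : ℝ → ℝ := fun u => (T - u) ^ (-(2 * m)) with hfdef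
    have hcont : ∀ a b : ℝ, a ≤ b → b < T → IntervalIntegrable f volume a b := by
      intro a b hab hb
      apply ContinuousOn.intervalIntegrable
      apply ContinuousOn.rpow_const
      · exact (continuous_const.sub continuous_id).continuousOn
      · intro x hx
        left
        rw [Set.uIcc_of_le hab] at hx
        have hxb : x ≤ b := hx.2
        have : (0:ℝ) < T - x := by linarith
        exact ne_of_gt this
    set a := 2 * s - T with hadef
    have hta : t ≤ a := by rw [hadef, hmiddef] at *; linarith
    have has : a ≤ s := by rw [hadef]; linarith
    set I := ∫ u in t..s, (T - u) ^ (-(2 * m)) with hIdef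
    have hsplit : I = (∫ u in t..a, f u) + ∫ u in a..s, f u :=
      (intervalIntegral.integral_add_adjacent_intervals (hcont t a hta (by linarith))
        (hcont a s has hsT)).symm
    have h1 : 0 ≤ ∫ u in t..a, f u := by
      apply intervalIntegral.integral_nonneg hta
      intro u hu
      exact Real.rpow_nonneg (by rw [Set.mem_Icc] at hu; linarith [hu.2]) _
    have h2 : (T - s) * (2 * (T - s)) ^ (-(2 * m)) ≤ ∫ u in a..s, f u := by
      have hmono := intervalIntegral.integral_mono_on has
        (intervalIntegrable_const (c := (2 * (T - s)) ^ (-(2 * m))))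
        (hcont a s has hsT) ?_
      · rwa [intervalIntegral.integral_const, smul_eq_mul,
          show s - a = T - s by rw [hadef]; ring] at hmono
      · intro u hu
        rw [Set.mem_Icc] at hu
        have hu1 : (0:ℝ) < T - u := by linarith [hu.2]
        have hu2 : T - u ≤ 2 * (T - s) := by rw [hadef] at hu; linarith [hu.1]
        exact Real.rpow_le_rpow_of_nonpos hu1 hu2 (by linarith)
    set r := ε * (T - s) ^ (2 * m) * I with hrdef
    have hpow : (T - s) ^ (2 * m) * ((2 * (T - s)) ^ (-(2 * m))) = (2:ℝ) ^ (-(2 * m)) := by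
      rw [Real.mul_rpow (by norm_num) hτ.le, ← mul_assoc, mul_comm ((T - s) ^ (2 * m)),
        mul_assoc, ← Real.rpow_add hτ]
      simp
    have hI : (T - s) * (2 * (T - s)) ^ (-(2 * m)) ≤ I := by
      rw [hsplit]; linarith
    have hrlow : ε * (2:ℝ) ^ (-(2 * m)) * (T - s) ≤ r := by
      calc ε * (2:ℝ) ^ (-(2 * m)) * (T - s)
          = ε * ((T - s) ^ (2 * m) * ((T - s) * (2 * (T - s)) ^ (-(2 * m)))) := by
            rw [show (T - s) ^ (2 * m) * ((T - s) * (2 * (T - s)) ^ (-(2 * m)))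
                = ((T - s) ^ (2 * m) * ((2 * (T - s)) ^ (-(2 * m)))) * (T - s) by ring, hpow]
            ring
        _ ≤ ε * ((T - s) ^ (2 * m) * I) :=
            mul_le_mul_of_nonneg_left
              (mul_le_mul_of_nonneg_left hI (Real.rpow_nonneg hτ.le _)) hε.le
        _ = r := by rw [hrdef]; ring
    have hr0 : 0 ≤ r := le_trans (by positivity) hrlow
    -- rewrite the inner integral using the distribution of Z s
    have hinner : ∫⁻ ω, ENNReal.ofReal ((Z s ω) ^ 2 / (T - s) ^ 2) ∂P
        = (∫⁻ x, ENNReal.ofReal (x ^ 2)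
            ∂(gaussianReal (((T - s) / (T - t)) ^ m * z) (Real.toNNReal r)))
          * ENNReal.ofReal (((T - s) ^ 2)⁻¹) := by
      rw [lintegral_congr (fun ω => by
        rw [div_eq_mul_inv, ENNReal.ofReal_mul (sq_nonneg ((Z s ω)))])]
      rw [lintegral_mul_const _ (((hZs s).pow_const 2).ennreal_ofReal)]
      congr 1
      rw [hrdef, hIdef, ← hdist s hts.le hsT]
      exact (lintegral_map ((measurable_id.pow_const 2).ennreal_ofReal) (hZs s)).symm
    rw [hinner]
    have hmoment := gauss_sq_moment (((T - s) / (T - t)) ^ m * z) (Real.toNNReal r)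
    rw [Real.coe_toNNReal r hr0] at hmoment
    calc ENNReal.ofReal (c / (T - s))
        ≤ ENNReal.ofReal (κ * r * ((T - s) ^ 2)⁻¹) := by
          apply ENNReal.ofReal_le_ofReal
          have hceq : c / (T - s) = κ * (ε * (2:ℝ) ^ (-(2 * m)) * (T - s)) * ((T - s) ^ 2)⁻¹ := by
            rw [hcdef]; field_simp
          rw [hceq]
          exact mul_le_mul_of_nonneg_right
            (mul_le_mul_of_nonneg_left hrlow hκ.le) (by positivity)
      _ = ENNReal.ofReal (κ * r) * ENNReal.ofReal (((T - s) ^ 2)⁻¹) :=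
          ENNReal.ofReal_mul (by positivity)
      _ ≤ (∫⁻ x, ENNReal.ofReal (x ^ 2)
            ∂(gaussianReal (((T - s) / (T - t)) ^ m * z) (Real.toNNReal r)))
          * ENNReal.ofReal (((T - s) ^ 2)⁻¹) := mul_le_mul_left hmoment _
  -- conclude
  rw [eq_top_iff]
  calc (⊤ : ENNReal) = ∫⁻ s in Set.Ioo mid T, ENNReal.ofReal (c / (T - s)) :=
        (lintegral_ofReal_inv_sub_eq_top hc hmid2).symm
    _ ≤ ∫⁻ s in Set.Ioo mid T, ∫⁻ ω, ENNReal.ofReal ((Z s ω) ^ 2 / (T - s) ^ 2) ∂P := by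
        apply setLIntegral_mono (hF.lintegral_prod_left) key
    _ ≤ ∫⁻ s in Set.Ioo t T, ∫⁻ ω, ENNReal.ofReal ((Z s ω) ^ 2 / (T - s) ^ 2) ∂P :=
        lintegral_mono_set (Set.Ioo_subset_Ioo hmid1.le le_rfl)
end

section
/- Let q : ℝ² → ℝ be convex in (x,y) on the open set U = {(x,y) : y < F(x)} where F is a convex function, with q(x,y) = 0 whenever y ≥ F(x), and suppose q is continuous on ℝ² and convex on the convex set V = {(x,y) : y ≥ F(x)} (where it vanishes). If q is locally convex on U, then q is convex on all of ℝ². -/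
open Set Metric

private lemma affine_convexOn {s : Set ℝ} (hs : Convex ℝ s) (m d : ℝ) :
    ConvexOn ℝ s (fun t => m * t + d) := by
  refine ⟨hs, fun p _ r _ a b ha hb hab => le_of_eq ?_⟩
  simp only [smul_eq_mul]
  linear_combination (-d) * hab

/-- Local convexity in the interior of an interval plus continuity implies the
segment inequality. -/
private lemma oneDim (g : ℝ → ℝ) (hg : Continuous g) (u v : ℝ) (huv : u < v)
    (hl : ∀ t ∈ Set.Ioo u v, ∃ ε > 0, ConvexOn ℝ (Metric.ball t ε) g)
    (c : ℝ) (hc : c ∈ Set.Icc u v) :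
    g c ≤ ((v - c)/(v - u)) * g u + ((c - u)/(v - u)) * g v := by
  have hvu : (0:ℝ) < v - u := by linarith
  set m : ℝ := (g v - g u) / (v - u) with hm
  set φ : ℝ → ℝ := fun t => g t - (g u + (t - u) * m) with hφ
  have hφcont : Continuous φ := by fun_prop
  have hφu : φ u = 0 := by simp [hφ]
  have hφv : φ v = 0 := by
    simp only [hφ, hm]
    field_simp
    ring
  -- main claim : φ ≤ 0 on Icc u v
  have key : ∀ t ∈ Icc u v, φ t ≤ 0 := by
    obtain ⟨t0, ht0mem, ht0max⟩ :=
      isCompact_Icc.exists_isMaxOn ⟨u, le_refl u, le_of_lt huv⟩ hφcont.continuousOn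
    set M := φ t0 with hM
    have hMle : ∀ t ∈ Icc u v, φ t ≤ M := fun t ht => ht0max ht
    have hM0 : M ≤ 0 := by
      by_contra hMpos
      push_neg at hMpos
      set A : Set ℝ := {t | t ∈ Icc u v ∧ φ t = M} with hA
      have hAclosed : IsClosed A :=
        isClosed_Icc.inter (isClosed_eq hφcont continuous_const)
      have hAne : A.Nonempty := ⟨t0, ht0mem, rfl⟩
      have hAbdd : BddBelow A := ⟨u, fun t ht => ht.1.1⟩
      set τ := sInf A with hτ
      have hτA : τ ∈ A := hAclosed.csInf_mem hAne hAbdd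
      have hτIcc : τ ∈ Icc u v := hτA.1
      have hτu : u < τ := by
        rcases eq_or_lt_of_le hτIcc.1 with h | h
        · exfalso; rw [← h] at hτA; have := hτA.2; rw [hφu] at this; linarith
        · exact h
      have hτv : τ < v := by
        rcases eq_or_lt_of_le hτIcc.2 with h | h
        · exfalso; rw [h] at hτA; have := hτA.2; rw [hφv] at this; linarith
        · exact h
      obtain ⟨ε, hε, hconv⟩ := hl τ ⟨hτu, hτv⟩
      set δ := min (ε/2) (min (τ - u) (v - τ)) with hδ
      have hδpos : 0 < δ := by
        apply lt_min (by linarith) (lt_min (by linarith) (by linarith))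
      have hδε : δ < ε := lt_of_le_of_lt (min_le_left _ _) (by linarith)
      have h1 : τ - δ ∈ Metric.ball τ ε := by
        rw [Metric.mem_ball, Real.dist_eq,
          show τ - δ - τ = -δ by ring, abs_neg, abs_of_pos hδpos]
        exact hδε
      have h2 : τ + δ ∈ Metric.ball τ ε := by
        rw [Metric.mem_ball, Real.dist_eq,
          show τ + δ - τ = δ by ring, abs_of_pos hδpos]
        exact hδε
      have hφconv : ConvexOn ℝ (Metric.ball τ ε) φ := by
        have haff := affine_convexOn (convex_ball τ ε) (-m) (-(g u) + u * m)
        have := hconv.add haff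
        refine this.congr (fun t _ => ?_)
        simp only [hφ, Pi.add_apply]; ring
      have hmid := hφconv.2 h1 h2 (by norm_num : (0:ℝ) ≤ 1/2)
        (by norm_num : (0:ℝ) ≤ 1/2) (by norm_num)
      have hmideq : (1/2 : ℝ) • (τ - δ) + (1/2 : ℝ) • (τ + δ) = τ := by
        simp only [smul_eq_mul]; ring
      rw [hmideq] at hmid
      have hml : τ - δ ∈ Icc u v := by
        constructor <;> [skip; skip] <;>
          · have h3 : δ ≤ min (τ - u) (v - τ) := min_le_right _ _
            have h4 : δ ≤ τ - u := le_trans h3 (min_le_left _ _)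
            have h5 : δ ≤ v - τ := le_trans h3 (min_le_right _ _)
            linarith
      have hmr : τ + δ ∈ Icc u v := by
        constructor <;>
          · have h3 : δ ≤ min (τ - u) (v - τ) := min_le_right _ _
            have h4 : δ ≤ τ - u := le_trans h3 (min_le_left _ _)
            have h5 : δ ≤ v - τ := le_trans h3 (min_le_right _ _)
            linarith
      have hlstrict : φ (τ - δ) < M := by
        rcases lt_or_eq_of_le (hMle _ hml) with h | h
        · exact h
        · exfalso
          have : τ - δ ∈ A := ⟨hml, h⟩
          have := csInf_le hAbdd this
          rw [← hτ] at this
          linarith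
      have hrle : φ (τ + δ) ≤ M := hMle _ hmr
      rw [hτA.2] at hmid
      simp only [smul_eq_mul] at hmid
      clear_value δ τ A M φ m
      linarith [hmid, hlstrict, hrle]
    intro t ht
    exact le_trans (hMle t ht) hM0
  have hc' := key c hc
  have hexp : g u + (c - u) * m = (v - c)/(v - u) * g u + (c - u)/(v - u) * g v := by
    rw [hm]; field_simp; ring
  simp only [hφ] at hc'
  linarith [hc', hexp.symm ▸ hc']

/-- Let `F : ℝ → ℝ` be convex and let `q : ℝ² → ℝ` be continuous and nonnegative, vanishing on
the convex set `V = {(x,y) : y ≥ F(x)}` and locally convex on the open set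
`U = {(x,y) : y < F(x)}`. Then `q` is convex on all of `ℝ²`. -/
theorem convexity_from_local_convexity_and_vanishing
    (F : ℝ → ℝ) (hF : ConvexOn ℝ Set.univ F)
    (q : ℝ × ℝ → ℝ) (hq : Continuous q) (hnn : ∀ p, 0 ≤ q p)
    (hzero : ∀ p : ℝ × ℝ, F p.1 ≤ p.2 → q p = 0)
    (hloc : ∀ p : ℝ × ℝ, p.2 < F p.1 → ∃ ε > 0, ConvexOn ℝ (Metric.ball p ε) q) :
    ConvexOn ℝ Set.univ q := by
  refine ⟨convex_univ, ?_⟩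
  intro x _ y _ a b ha hb hab
  -- trivial scalar cases
  rcases eq_or_lt_of_le ha with ha0 | ha
  · have hb1 : b = 1 := by linarith
    rw [← ha0, hb1]; simp
  rcases eq_or_lt_of_le hb with hb0 | hb
  · have ha1 : a = 1 := by linarith
    rw [← hb0, ha1]; simp
  have hb1 : b < 1 := by linarith
  set c := a • x + b • y with hc
  -- if c is in V we are done
  by_cases hcV : F c.1 ≤ c.2
  · rw [hzero c hcV]
    have := hnn x; have := hnn y
    have : 0 ≤ a • q x := smul_nonneg ha.le (hnn x)
    have : 0 ≤ b • q y := smul_nonneg hb.le (hnn y)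
    linarith
  push_neg at hcV
  -- degenerate segment
  by_cases hxy : x = y
  · have hcx : c = y := by rw [hc, hxy, ← add_smul, hab, one_smul]
    rw [hcx, hxy]
    have h1 : a • q y + b • q y = q y := by
      rw [← add_smul, hab, one_smul]
    rw [h1]
  -- the line through x and y
  set L : ℝ →ᵃ[ℝ] ℝ × ℝ := AffineMap.lineMap x y with hL
  have hLapp : ∀ t : ℝ, L t = (1 - t) • x + t • y := fun t =>
    AffineMap.lineMap_apply_module x y t
  have hLcont : Continuous (L : ℝ → ℝ × ℝ) := by
    have : (L : ℝ → ℝ × ℝ) = fun t => (1 - t) • x + t • y := funext hLapp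
    rw [this]; fun_prop
  set g : ℝ → ℝ := fun t => q (L t) with hg
  have hgcont : Continuous g := hq.comp hLcont
  have hg0 : g 0 = q x := by simp [hg, hLapp]
  have hg1 : g 1 = q y := by simp [hg, hLapp]
  have hab' : (1:ℝ) - b = a := by linarith
  have hgb : g b = q c := by
    simp only [hg]
    rw [hLapp, hab', ← hc]
  -- local convexity of g off the preimage of V
  have hnorm : 0 < ‖y - x‖ := by
    rw [norm_pos_iff]
    intro h
    exact hxy (by rw [sub_eq_zero] at h; exact h.symm)
  have hlocg : ∀ t : ℝ, (L t).2 < F (L t).1 → ∃ δ > 0, ConvexOn ℝ (Metric.ball t δ) g := by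
    intro t ht
    obtain ⟨ε, hε, hconv⟩ := hloc (L t) ht
    refine ⟨ε / ‖y - x‖, div_pos hε hnorm, ?_⟩
    have hsub : Metric.ball t (ε / ‖y - x‖) ⊆ (L : ℝ → ℝ × ℝ) ⁻¹' (Metric.ball (L t) ε) := by
      intro s hs
      simp only [Metric.mem_ball, mem_preimage] at hs ⊢
      have hdist : dist (L s) (L t) = |s - t| * ‖y - x‖ := by
        rw [dist_eq_norm]
        have : L s - L t = (s - t) • (y - x) := by
          simp only [hLapp]
          module
        rw [this, norm_smul, Real.norm_eq_abs]
      rw [hdist]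
      rw [Real.dist_eq] at hs
      calc |s - t| * ‖y - x‖ < (ε / ‖y - x‖) * ‖y - x‖ :=
            mul_lt_mul_of_pos_right hs hnorm
        _ = ε := div_mul_cancel₀ ε (ne_of_gt hnorm)
    exact ((hconv.comp_affineMap L).subset hsub (convex_ball _ _))
  -- the preimage of V
  set S : Set ℝ := (L : ℝ → ℝ × ℝ) ⁻¹' {p : ℝ × ℝ | F p.1 ≤ p.2} with hS
  have hVconv : Convex ℝ {p : ℝ × ℝ | F p.1 ≤ p.2} := by
    have := hF.convex_epigraph
    simpa using this
  have hSconv : Convex ℝ S := hVconv.affine_preimage L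
  have hSg : ∀ t ∈ S, g t = 0 := fun t ht => hzero (L t) ht
  have hLb : L b = c := by
    rw [hLapp, hab', ← hc]
  have hbS : b ∉ S := by
    intro h
    simp only [hS, mem_preimage, mem_setOf_eq, hLb] at h
    exact absurd h (not_le_of_gt hcV)
  set T : Set ℝ := S ∩ Icc 0 1 with hT
  have hTconv : Convex ℝ T := hSconv.inter (convex_Icc 0 1)
  -- goal restated via g
  have goal_iff : q c ≤ a • q x + b • q y ↔ g b ≤ a * g 0 + b * g 1 := by
    rw [hg0, hg1, hgb]; simp [smul_eq_mul]
  rw [goal_iff]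
  have hg0nn : 0 ≤ g 0 := by rw [hg0]; exact hnn x
  have hg1nn : 0 ≤ g 1 := by rw [hg1]; exact hnn y
  by_cases hTe : T = ∅
  · -- whole open segment lies in U
    have hloc' : ∀ t ∈ Ioo (0:ℝ) 1, ∃ ε > 0, ConvexOn ℝ (Metric.ball t ε) g := by
      intro t ht
      apply hlocg
      by_contra hcon
      push_neg at hcon
      have htT : t ∈ T := ⟨hcon, ht.1.le, ht.2.le⟩
      rw [hTe] at htT
      exact htT
    have h := oneDim g hgcont 0 1 one_pos hloc' b ⟨hb.le, hb1.le⟩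
    calc g b ≤ ((1:ℝ) - b)/(1 - 0) * g 0 + (b - 0)/(1 - 0) * g 1 := h
      _ = a * g 0 + b * g 1 := by rw [hab']; ring
  · have hTne : T.Nonempty := Set.nonempty_iff_ne_empty.mpr hTe
    have hbT : b ∉ T := fun h => hbS h.1
    have hside : (∀ t ∈ T, b < t) ∨ (∀ t ∈ T, t < b) := by
      by_contra hcon
      push_neg at hcon
      obtain ⟨⟨t1, ht1, ht1b⟩, ⟨t2, ht2, hbt2⟩⟩ := hcon
      exact hbT (hTconv.ordConnected.out ht1 ht2 ⟨ht1b, hbt2⟩)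
    rcases hside with hright | hleft
    · -- V part of the segment lies beyond b
      set β := sInf T with hβ
      have hbddb : BddBelow T := ⟨0, fun t ht => ht.2.1⟩
      have hβcl : β ∈ closure T := csInf_mem_closure hTne hbddb
      have hgβ : g β = 0 := by
        have hsubc : closure T ⊆ g ⁻¹' {0} :=
          closure_minimal (fun t ht => hSg t ht.1)
            (IsClosed.preimage hgcont isClosed_singleton)
        simpa using hsubc hβcl
      have hβb : b ≤ β := le_csInf hTne (fun t ht => (hright t ht).le)
      have hβ1 : β ≤ 1 := by
        obtain ⟨t, htT⟩ := hTne
        exact le_trans (csInf_le hbddb htT) htT.2.2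
      rcases eq_or_lt_of_le hβb with heq | hlt
      · rw [← heq] at hgβ
        rw [hgβ]
        have h1 : 0 ≤ a * g 0 := mul_nonneg ha.le hg0nn
        have h2 : 0 ≤ b * g 1 := mul_nonneg hb.le hg1nn
        linarith
      · have hβpos : (0:ℝ) < β := lt_trans hb hlt
        have hloc' : ∀ t ∈ Ioo (0:ℝ) β, ∃ ε > 0, ConvexOn ℝ (Metric.ball t ε) g := by
          intro t ht
          apply hlocg
          by_contra hcon
          push_neg at hcon
          have htT : t ∈ T := ⟨hcon, ht.1.le, le_trans ht.2.le hβ1⟩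
          have := csInf_le hbddb htT
          rw [← hβ] at this
          linarith [ht.2]
        have h := oneDim g hgcont 0 β hβpos hloc' b ⟨hb.le, hlt.le⟩
        clear_value β
        have hfrac : (β - b)/(β - 0) ≤ a := by
          rw [sub_zero, div_le_iff₀ hβpos]
          have h1 : b * β ≤ b * 1 := mul_le_mul_of_nonneg_left hβ1 hb.le
          have h2 : a * β = β - b * β := by rw [← hab']; ring
          linarith
        calc g b ≤ (β - b)/(β - 0) * g 0 + (b - 0)/(β - 0) * g β := h
          _ = (β - b)/(β - 0) * g 0 := by rw [hgβ]; ring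
          _ ≤ a * g 0 := mul_le_mul_of_nonneg_right hfrac hg0nn
          _ ≤ a * g 0 + b * g 1 := le_add_of_nonneg_right (mul_nonneg hb.le hg1nn)
    · -- V part of the segment lies before b
      set α := sSup T with hα
      have hbdda : BddAbove T := ⟨1, fun t ht => ht.2.2⟩
      have hαcl : α ∈ closure T := csSup_mem_closure hTne hbdda
      have hgα : g α = 0 := by
        have hsubc : closure T ⊆ g ⁻¹' {0} :=
          closure_minimal (fun t ht => hSg t ht.1)
            (IsClosed.preimage hgcont isClosed_singleton)
        simpa using hsubc hαcl
      have hαb : α ≤ b := csSup_le hTne (fun t ht => (hleft t ht).le)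
      have hα0 : (0:ℝ) ≤ α := by
        obtain ⟨t, htT⟩ := hTne
        exact le_trans htT.2.1 (le_csSup hbdda htT)
      rcases eq_or_lt_of_le hαb with heq | hlt
      · rw [heq] at hgα
        rw [hgα]
        have h1 : 0 ≤ a * g 0 := mul_nonneg ha.le hg0nn
        have h2 : 0 ≤ b * g 1 := mul_nonneg hb.le hg1nn
        linarith
      · have hα1 : α < 1 := lt_trans hlt hb1
        have hloc' : ∀ t ∈ Ioo α 1, ∃ ε > 0, ConvexOn ℝ (Metric.ball t ε) g := by
          intro t ht
          apply hlocg
          by_contra hcon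
          push_neg at hcon
          have htT : t ∈ T := ⟨hcon, le_trans hα0 ht.1.le, ht.2.le⟩
          have := le_csSup hbdda htT
          rw [← hα] at this
          linarith [ht.1]
        have h := oneDim g hgcont α 1 hα1 hloc' b ⟨hlt.le, hb1.le⟩
        clear_value α
        have hfrac : (b - α)/(1 - α) ≤ b := by
          rw [div_le_iff₀ (by linarith : (0:ℝ) < 1 - α)]
          have h1 : b * α ≤ 1 * α := mul_le_mul_of_nonneg_right hb1.le hα0
          have h2 : b * (1 - α) = b - b * α := by ring
          linarith
        calc g b ≤ (1 - b)/(1 - α) * g α + (b - α)/(1 - α) * g 1 := h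
          _ = (b - α)/(1 - α) * g 1 := by rw [hgα]; ring
          _ ≤ b * g 1 := mul_le_mul_of_nonneg_right hfrac hg1nn
          _ ≤ a * g 0 + b * g 1 := le_add_of_nonneg_left (mul_nonneg ha.le hg0nn)
end

section
/- Let V : [t,T] → [0,∞) be continuous, and let (φ, ψ) : [t,T] → ℝ² solve the linear system φ'(s) = a(s)φ(s) - ψ(s), ψ'(s) = -a(s)ψ(s) - V(s)φ(s), with terminal data φ(T) = 0, ψ(T) = 1, where a : [t,T] → ℝ is continuous. Then φ(s) > 0 and ψ(s) > 0 for all s ∈ [t,T). -/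
/-- Positivity for the Jacobi-type system `φ' = aφ - ψ`, `ψ' = -aψ - Vφ` with terminal data
`φ(T) = 0`, `ψ(T) = 1` and `V ≥ 0`: both `φ` and `ψ` are strictly positive on `[t,T)`. -/
theorem jacobi_system_positivity (t T : ℝ) (ht : t < T) (a V φ ψ : ℝ → ℝ)
    (ha : ContinuousOn a (Set.Icc t T)) (hV : ContinuousOn V (Set.Icc t T))
    (hVnn : ∀ s ∈ Set.Icc t T, 0 ≤ V s)
    (hφ : ∀ s ∈ Set.Icc t T, HasDerivAt φ (a s * φ s - ψ s) s)
    (hψ : ∀ s ∈ Set.Icc t T, HasDerivAt ψ (-(a s) * ψ s - V s * φ s) s)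
    (hφT : φ T = 0) (hψT : ψ T = 1) :
    ∀ s ∈ Set.Ico t T, 0 < φ s ∧ 0 < ψ s := by
  have hψc : ContinuousOn ψ (Set.Icc t T) := fun x hx =>
    (hψ x hx).continuousAt.continuousWithinAt
  have hφc : ContinuousOn φ (Set.Icc t T) := fun x hx =>
    (hφ x hx).continuousAt.continuousWithinAt
  set g : ℝ → ℝ := fun x => φ x * ψ x with hg_def
  have hg : ∀ x ∈ Set.Icc t T, HasDerivAt g (-(ψ x ^ 2 + V x * φ x ^ 2)) x := by
    intro x hx
    have h := (hφ x hx).mul (hψ x hx)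
    have e : -(ψ x ^ 2 + V x * φ x ^ 2) = (a x * φ x - ψ x) * ψ x + φ x * (-(a x) * ψ x - V x * φ x) := by ring
    rw [e]
    exact h
  have hgc : ContinuousOn g (Set.Icc t T) := hφc.mul hψc
  have hderiv : ∀ x ∈ Set.Icc t T, deriv g x = -(ψ x ^ 2 + V x * φ x ^ 2) :=
    fun x hx => (hg x hx).deriv
  have hgT : g T = 0 := by simp [hg_def, hφT]
  -- g is antitone on [t,T]
  have hanti : AntitoneOn g (Set.Icc t T) := by
    apply antitoneOn_of_deriv_nonpos (convex_Icc t T) hgc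
    · intro x hx
      rw [interior_Icc] at hx
      exact ((hg x (Set.Ioo_subset_Icc_self hx)).differentiableAt).differentiableWithinAt
    · intro x hx
      rw [interior_Icc] at hx
      have hx' := Set.Ioo_subset_Icc_self hx
      rw [hderiv x hx']
      nlinarith [sq_nonneg (ψ x), mul_nonneg (hVnn x hx') (sq_nonneg (φ x))]
  -- near T, ψ > 1/2
  have hψcT : ContinuousAt ψ T := (hψ T (Set.right_mem_Icc.2 ht.le)).continuousAt
  have hev : ∀ᶠ x in nhds T, (1:ℝ)/2 < ψ x := by
    have h1 : (1:ℝ)/2 < ψ T := by rw [hψT]; norm_num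
    exact hψcT.eventually (eventually_gt_nhds h1)
  obtain ⟨δ, hδ, hball⟩ := Metric.eventually_nhds_iff.1 hev
  set c : ℝ := max t (T - δ) with hc_def
  have hcT : c < T := max_lt ht (by linarith)
  have htc : t ≤ c := le_max_left _ _
  have hcmem : c ∈ Set.Icc t T := ⟨htc, hcT.le⟩
  -- g strictly antitone on [c,T]
  have hstrict : StrictAntiOn g (Set.Icc c T) := by
    apply strictAntiOn_of_deriv_neg (convex_Icc c T)
      (hgc.mono (Set.Icc_subset_Icc htc le_rfl))
    intro x hx
    rw [interior_Icc] at hx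
    have hx' : x ∈ Set.Icc t T := ⟨le_trans htc hx.1.le, hx.2.le⟩
    have hψx : (1:ℝ)/2 < ψ x := by
      apply hball
      rw [Real.dist_eq, abs_sub_lt_iff]
      constructor
      · linarith [hx.2]
      · have : T - δ ≤ c := le_max_right _ _
        linarith [hx.1]
    rw [hderiv x hx']
    nlinarith [mul_nonneg (hVnn x hx') (sq_nonneg (φ x))]
  -- g is positive on [t,T)
  have hgpos : ∀ x ∈ Set.Ico t T, 0 < g x := by
    intro x hx
    set m : ℝ := max x c with hm_def
    have hmT : m < T := max_lt hx.2 hcT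
    have hmmem : m ∈ Set.Icc c T := ⟨le_max_right _ _, hmT.le⟩
    have h1 : g T < g m := hstrict hmmem (Set.right_mem_Icc.2 hcT.le) hmT
    have h2 : g m ≤ g x := by
      apply hanti ⟨hx.1, hx.2.le⟩ ⟨le_trans htc (le_max_right _ _), hmT.le⟩ (le_max_left _ _)
    rw [hgT] at h1
    linarith
  -- ψ positive on [t,T)
  intro s hs
  have hgs : 0 < g s := hgpos s hs
  have hψs : 0 < ψ s := by
    by_contra h
    push_neg at h
    have hψne : ψ s ≠ 0 := by
      intro h0
      simp [hg_def, h0] at hgs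
    have hψlt : ψ s < 0 := lt_of_le_of_ne h hψne
    have hIVT := intermediate_value_Icc hs.2.le (hψc.mono (Set.Icc_subset_Icc hs.1 le_rfl))
    have h0mem : (0:ℝ) ∈ Set.Icc (ψ s) (ψ T) := ⟨hψlt.le, by rw [hψT]; norm_num⟩
    obtain ⟨x, hxmem, hx0⟩ := hIVT h0mem
    have hxT : x ≠ T := by
      intro hxe
      rw [hxe, hψT] at hx0
      norm_num at hx0
    have hgx := hgpos x ⟨le_trans hs.1 hxmem.1, lt_of_le_of_ne hxmem.2 hxT⟩
    simp [hg_def, hx0] at hgx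
  refine ⟨?_, hψs⟩
  have h3 : 0 < φ s * ψ s := hgs
  nlinarith [h3, hψs]
end
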